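/- arXiv:1902.03391 — 7 statements merged into one kernel-verified Lean document; each statement's English description precedes it below -/
import Mathlib

section
/- Let G and H be finite simple graphs with |V(G)| = |V(H)| = n ≥ 2, where H is connected and vertex-transitive, and G has domination number 1 (i.e., G has a vertex adjacent to every other vertex). Then dil(G,H) = d(H), the diameter of H: every bijection f : V(G) → V(H) has some edge uv of G with dist_H(f(u), f(v)) ≥ d(H), and there exists a bijection whose maximum dilation is exactly d(H). -/
open SimpleGraph

/-- Eccentricity of a vertex: the maximum distance to any other vertex. -/
noncomputable def eccent {W : Type*} [Fintype W] (H : SimpleGraph W) (v : W) : ℕ :=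
  Finset.univ.sup fun w => H.dist v w

/-- The diameter of a graph: the maximum eccentricity / max distance between pairs. -/
noncomputable def graphDiam {W : Type*} [Fintype W] (H : SimpleGraph W) : ℕ :=
  Finset.univ.sup fun v => eccent H v

lemma iso_dist_le {W : Type*} (H : SimpleGraph W) (hH : H.Connected) (φ : H ≃g H) (a b : W) :
    H.dist (φ a) (φ b) ≤ H.dist a b := by
  obtain ⟨p, hp⟩ := hH.exists_walk_length_eq_dist a b
  calc H.dist (φ a) (φ b) ≤ (p.map φ.toHom).length := SimpleGraph.dist_le _
    _ = p.length := p.length_map _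
    _ = H.dist a b := hp

lemma iso_dist_eq {W : Type*} (H : SimpleGraph W) (hH : H.Connected) (φ : H ≃g H) (a b : W) :
    H.dist (φ a) (φ b) = H.dist a b := by
  refine le_antisymm (iso_dist_le H hH φ a b) ?_
  have := iso_dist_le H hH φ.symm (φ a) (φ b)
  simpa using this

lemma eccent_eq {W : Type*} [Fintype W] (H : SimpleGraph W) (hH : H.Connected)
    (htrans : ∀ a b : W, ∃ φ : H ≃g H, φ a = b) (a b : W) :
    _root_.eccent H a = _root_.eccent H b := by
  obtain ⟨φ, hφ⟩ := htrans a b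
  subst hφ
  unfold _root_.eccent
  apply le_antisymm
  · exact Finset.sup_le fun w _ => by
      have : H.dist a w = H.dist (φ a) (φ w) := (iso_dist_eq H hH φ a w).symm
      exact this ▸ Finset.le_sup (Finset.mem_univ (φ w))
  · exact Finset.sup_le fun w _ => by
      have h2 : H.dist (φ a) w = H.dist a (φ.symm w) := by
        conv_lhs => rw [show w = φ (φ.symm w) by simp]
        exact iso_dist_eq H hH φ a (φ.symm w)
      exact h2 ▸ Finset.le_sup (Finset.mem_univ (φ.symm w))

theorem dilation_eq_diam_of_vertex_transitive
    {V W : Type*} [Fintype V] [Fintype W]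
    (G : SimpleGraph V) (H : SimpleGraph W) (n : ℕ)
    (hGcard : Fintype.card V = n) (hHcard : Fintype.card W = n) (hn : 2 ≤ n)
    (hH : H.Connected)
    (htrans : ∀ a b : W, ∃ φ : H ≃g H, φ a = b)
    (hdom : ∃ v : V, ∀ u : V, u ≠ v → G.Adj v u) :
    (∀ f : V ≃ W, ∃ u v : V, G.Adj u v ∧ graphDiam H ≤ H.dist (f u) (f v)) ∧
    (∃ f : V ≃ W, ∀ u v : V, G.Adj u v → H.dist (f u) (f v) ≤ graphDiam H) := by
  have hWne : Nonempty W := by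
    have : 0 < Fintype.card W := by omega
    exact Fintype.card_pos_iff.mp this
  have hecc : ∀ a : W, graphDiam H = _root_.eccent H a := by
    intro a
    unfold graphDiam
    apply le_antisymm
    · exact Finset.sup_le fun v _ => le_of_eq (eccent_eq H hH htrans v a)
    · exact Finset.le_sup (Finset.mem_univ a)
  constructor
  · intro f
    obtain ⟨v₀, hv₀⟩ := hdom
    -- find w attaining eccentricity of f v₀
    obtain ⟨w, _, hw⟩ := Finset.exists_mem_eq_sup Finset.univ Finset.univ_nonempty
      (fun w => H.dist (f v₀) w)
    have hwdist : H.dist (f v₀) w = graphDiam H := by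
      rw [hecc (f v₀)]; exact hw.symm
    have hpos : 0 < graphDiam H := by
      obtain ⟨b, hb⟩ : ∃ b : W, b ≠ f v₀ := Fintype.exists_ne_of_one_lt_card (by omega) _
      have h1 : 0 < H.dist (f v₀) b :=
        hH.pos_dist_of_ne (Ne.symm hb)
      have h2 : H.dist (f v₀) b ≤ graphDiam H := by
        rw [hecc (f v₀)]
        exact Finset.le_sup (Finset.mem_univ b)
      omega
    have hwne : f.symm w ≠ v₀ := by
      intro h
      have : w = f v₀ := by rw [← h]; simp
      rw [this, SimpleGraph.dist_self] at hwdist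
      omega
    exact ⟨v₀, f.symm w, hv₀ _ hwne, by simp [hwdist]⟩
  · refine ⟨Fintype.equivOfCardEq (hGcard.trans hHcard.symm), fun u v _ => ?_⟩
    set f := Fintype.equivOfCardEq (hGcard.trans hHcard.symm)
    rw [hecc (f u)]
    exact Finset.le_sup (Finset.mem_univ (f v))
end

section
/- Let l ≥ 3 and n = 2^l − 1. Then dil(W_n, HT(l)) = l − 1: every bijection from the vertices of the wheel W_n to the vertices of the hypertree HT(l) has some edge of W_n whose endpoint images are at distance at least l − 1 in HT(l), and there exists a bijection under which every edge of W_n maps to a pair of vertices at distance at most l − 1 in HT(l). -/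
open SimpleGraph

/-- Wheel graph on `Fin n`: hub `0`, rim cycle `1, …, n-1`. -/
def wheelGraph (n : ℕ) : SimpleGraph (Fin n) where
  Adj x y := x ≠ y ∧ (x.val = 0 ∨ y.val = 0 ∨ y.val = x.val + 1 ∨ x.val = y.val + 1 ∨
    (x.val = 1 ∧ y.val = n - 1) ∨ (y.val = 1 ∧ x.val = n - 1))
  symm := ⟨by rintro x y ⟨h1, h2⟩; exact ⟨h1.symm, by tauto⟩⟩
  loopless := ⟨by rintro x ⟨h1, -⟩; exact h1 rfl⟩

/-- Adjacency of hypertree labels (1-based): binary tree edges plus horizontal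
edges between labels on the same level `i ≥ 2` differing by `2^(i-2)`.
The level of label `a` is `Nat.log 2 a + 1`. -/
def htAdjLbl (a b : ℕ) : Prop :=
  (b = 2 * a ∨ b = 2 * a + 1 ∨ a = 2 * b ∨ a = 2 * b + 1) ∨
  (a ≠ b ∧ Nat.log 2 a = Nat.log 2 b ∧ 1 ≤ Nat.log 2 a ∧
    max a b - min a b = 2 ^ (Nat.log 2 a - 1))

/-- The hypertree `HT(l)` on `Fin (2^l - 1)`; vertex `x` has label `x+1`. -/
def hypertree (l : ℕ) : SimpleGraph (Fin (2 ^ l - 1)) where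
  Adj x y := htAdjLbl (x.val + 1) (y.val + 1)
  symm := by
    constructor
    rintro x y (h | ⟨hne, hlog, hge, hdiff⟩)
    · left; tauto
    · right
      refine ⟨hne.symm, hlog.symm, ?_, ?_⟩
      · rw [← hlog]; exact hge
      · rw [max_comm, min_comm, ← hlog]; exact hdiff
  loopless := by
    constructor
    rintro x (h | ⟨hne, -⟩)
    · omega
    · exact hne rfl

namespace DilAux

lemma log2_le {a m : ℕ} (h1 : 1 ≤ a) (h2 : a < 2 ^ m) : Nat.log 2 a < m := by
  have h3 := Nat.pow_log_le_self 2 (by omega : a ≠ 0)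
  by_contra h
  have : 2 ^ m ≤ 2 ^ Nat.log 2 a := Nat.pow_le_pow_right (by omega) (by omega)
  omega

lemma log2_pow_add {k r : ℕ} (h : r < 2 ^ k) : Nat.log 2 (2 ^ k + r) = k :=
  Nat.log_eq_of_pow_le_of_lt_pow (by omega)
    (by rw [pow_succ]; omega)

lemma odd_mul_pow_inj : ∀ (j : ℕ) {i α β : ℕ}, (2*α+1)*2^j = (2*β+1)*2^i → α = β ∧ j = i := by
  intro j
  induction j with
  | zero =>
    intro i α β h
    cases i with
    | zero => simp at h; omega
    | succ i =>
      rw [pow_succ] at h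
      have : (2*β+1)*(2^i*2) = ((2*β+1)*2^i)*2 := by ring
      omega
  | succ j ih =>
    intro i α β h
    cases i with
    | zero =>
      rw [pow_succ] at h
      have : (2*α+1)*(2^j*2) = ((2*α+1)*2^j)*2 := by ring
      simp at h; omega
    | succ i =>
      rw [pow_succ, pow_succ, ← mul_assoc, ← mul_assoc] at h
      have h2 : (2*α+1)*2^j = (2*β+1)*2^i := by omega
      have := ih h2
      omega

/-- walk up to the ancestor: if `y+1 = (x+1)/2^t` then `dist y x ≤ t`. -/
lemma exists_walk_up (l : ℕ) : ∀ (t : ℕ) (x y : Fin (2^l - 1)),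
    y.val + 1 = (x.val + 1) / 2 ^ t → ∃ p : (hypertree l).Walk y x, p.length ≤ t := by
  intro t
  induction t with
  | zero =>
    intro x y h
    simp at h
    have : y = x := Fin.ext (by omega)
    subst this
    exact ⟨Walk.nil, by simp⟩
  | succ t ih =>
    intro x y h
    have hm : (x.val + 1) / 2 ^ (t+1) = ((x.val + 1) / 2 ^ t) / 2 := by
      rw [pow_succ, Nat.div_div_eq_div_mul]
    set m := (x.val + 1) / 2 ^ t with hmdef
    have hm2 : 2 ≤ m := by
      rcases Nat.lt_or_ge m 2 with h' | h'
      · interval_cases m <;> omega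
      · exact h'
    have hmle : m ≤ x.val + 1 := Nat.div_le_self _ _
    have hz : m - 1 < 2 ^ l - 1 := by have := x.isLt; omega
    set z : Fin (2^l - 1) := ⟨m - 1, hz⟩ with hzdef
    obtain ⟨p, hp⟩ := ih x z (by simp [hzdef]; omega)
    have hadj : (hypertree l).Adj y z := by
      show htAdjLbl (y.val + 1) (z.val + 1)
      left
      have : z.val + 1 = m := by simp [hzdef]; omega
      rw [this]
      have hy : y.val + 1 = m / 2 := by omega
      omega
    exact ⟨Walk.cons hadj p, by simp; omega⟩

lemma dist_up {l : ℕ} (x y : Fin (2^l - 1)) (t : ℕ)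
    (h : y.val + 1 = (x.val + 1) / 2 ^ t) : (hypertree l).dist y x ≤ t := by
  obtain ⟨p, hp⟩ := exists_walk_up l t x y h
  exact le_trans (SimpleGraph.dist_le p) hp

lemma reachable_root {l : ℕ} (hl : 1 ≤ l) (x : Fin (2^l - 1)) :
    (hypertree l).Reachable ⟨0, by have := Nat.one_lt_two_pow_iff (n := l); omega⟩ x := by
  have hdiv : (⟨0, by have := Nat.one_lt_two_pow_iff (n := l); omega⟩ : Fin (2^l - 1)).val + 1
      = (x.val + 1) / 2 ^ (Nat.log 2 (x.val + 1)) := by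
    have h1 := Nat.pow_log_le_self 2 (by omega : x.val + 1 ≠ 0)
    have h2 := Nat.lt_pow_succ_log_self (by omega : 1 < 2) (x.val + 1)
    rw [pow_succ] at h2
    have h3 : (x.val + 1) / 2 ^ (Nat.log 2 (x.val + 1)) = 1 :=
      Nat.div_eq_of_lt_le (by omega) (by omega)
    simp [h3]
  obtain ⟨p, _⟩ := exists_walk_up l (Nat.log 2 (x.val + 1)) x _ hdiv
  exact ⟨p⟩

lemma ht_reachable {l : ℕ} (hl : 1 ≤ l) (x y : Fin (2^l - 1)) :
    (hypertree l).Reachable x y :=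
  (reachable_root hl x).symm.trans (reachable_root hl y)


/-- in-order rank (0-based) of label `a` in the complete binary tree with `l` levels. -/
def rnk (l a : ℕ) : ℕ :=
  (a - 2 ^ Nat.log 2 a) * 2 ^ (l - Nat.log 2 a) + 2 ^ (l - 1 - Nat.log 2 a) - 1

/-- wheel position of label `a`. -/
def pos (l a : ℕ) : ℕ :=
  if a ≤ 1 then 0
  else if rnk l a < 2 ^ (l-1) - 1 then rnk l a + 1
  else 3 * 2 ^ (l-1) - 2 - rnk l a

lemma rnk_eq {l a : ℕ} (hl : 1 ≤ l) (h1 : 1 ≤ a) (h2 : a ≤ 2 ^ l - 1) :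
    Nat.log 2 a ≤ l - 1 ∧ (a - 2 ^ Nat.log 2 a) < 2 ^ Nat.log 2 a ∧
    2 ^ Nat.log 2 a ≤ a ∧
    rnk l a + 1 = (2 * (a - 2 ^ Nat.log 2 a) + 1) * 2 ^ (l - 1 - Nat.log 2 a) ∧
    rnk l a + 1 ≤ 2 ^ l - 1 := by
  set k := Nat.log 2 a with hk
  have hpow1 : 1 ≤ 2 ^ l := Nat.one_le_two_pow
  have hlow := Nat.pow_log_le_self 2 (by omega : a ≠ 0)
  have hhigh := Nat.lt_pow_succ_log_self (by omega : 1 < 2) a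
  rw [← hk] at hlow hhigh
  rw [pow_succ] at hhigh
  have hkl : k ≤ l - 1 := by
    have : k < l := DilAux.log2_le h1 (by omega)
    omega
  have hE : 2 ^ (l - k) = 2 * 2 ^ (l - 1 - k) := by
    have h := pow_succ 2 (l - 1 - k)
    have hh : l - 1 - k + 1 = l - k := by omega
    rw [hh] at h; omega
  have hj1 : 1 ≤ 2 ^ (l - 1 - k) := Nat.one_le_two_pow
  have e3 : (a - 2^k) * 2^(l-k) = 2 * ((a - 2^k) * 2^(l-1-k)) := by rw [hE]; ring
  have e4 : (2*(a - 2^k)+1) * 2^(l-1-k) = 2*((a - 2^k)*2^(l-1-k)) + 2^(l-1-k) := by ring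
  have hEk : 2 ^ k * 2 ^ (l-1-k) = 2 ^ (l-1) := by
    rw [← pow_add]; congr 1; omega
  have hEl : 2 ^ (l-1) * 2 = 2 ^ l := by
    have h := pow_succ 2 (l-1)
    have hh : l - 1 + 1 = l := by omega
    rw [hh] at h; omega
  have hab : 2*(a - 2^k)+1 ≤ 2*2^k - 1 := by omega
  have hmono := Nat.mul_le_mul_right (2^(l-1-k)) hab
  have e5 : (2*2^k - 1) * 2^(l-1-k) = 2*2^(l-1) - 2^(l-1-k) := by
    rw [Nat.sub_mul, mul_assoc, hEk, one_mul]
  refine ⟨hkl, by omega, hlow, ?_, ?_⟩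
  · unfold rnk
    rw [← hk]
    omega
  · unfold rnk at *
    rw [← hk] at *
    omega

lemma rnk_injOn {l a b : ℕ} (hl : 1 ≤ l) (ha1 : 1 ≤ a) (ha2 : a ≤ 2 ^ l - 1)
    (hb1 : 1 ≤ b) (hb2 : b ≤ 2 ^ l - 1) (h : rnk l a = rnk l b) : a = b := by
  obtain ⟨hka, hαa, hla, hra, -⟩ := rnk_eq hl ha1 ha2
  obtain ⟨hkb, hαb, hlb, hrb, -⟩ := rnk_eq hl hb1 hb2
  rw [h, hrb] at hra
  obtain ⟨hαeq, hjeq⟩ := DilAux.odd_mul_pow_inj _ hra.symm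
  have hloge : Nat.log 2 a = Nat.log 2 b := by omega
  have hpe : (2:ℕ) ^ Nat.log 2 a = 2 ^ Nat.log 2 b := by rw [hloge]
  omega

/-- if the rank is even, the label is the corresponding leaf. -/
lemma label_of_even_rnk {l a t : ℕ} (hl : 1 ≤ l) (h1 : 1 ≤ a) (h2 : a ≤ 2 ^ l - 1)
    (h : rnk l a = 2 * t) : a = 2 ^ (l-1) + t := by
  obtain ⟨hka, hαa, hla, hra, -⟩ := rnk_eq hl h1 h2
  rw [h] at hra
  have hra' : (2*(a - 2^Nat.log 2 a)+1) * 2^(l-1-Nat.log 2 a) = (2*t+1) * 2^(0:ℕ) := by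
    rw [pow_zero, mul_one]; omega
  obtain ⟨hαeq, hjeq⟩ := DilAux.odd_mul_pow_inj _ hra'
  have hloge : Nat.log 2 a = l - 1 := by omega
  have hpe : (2:ℕ) ^ Nat.log 2 a = 2 ^ (l-1) := by rw [hloge]
  omega

lemma root_rnk {l : ℕ} : rnk l 1 = 2 ^ (l-1) - 1 := by
  unfold rnk
  simp [Nat.log_one_right]

lemma root_of_rnk {l a : ℕ} (hl : 1 ≤ l) (h1 : 1 ≤ a) (h2 : a ≤ 2 ^ l - 1)
    (h : rnk l a = 2 ^ (l-1) - 1) : a = 1 := by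
  have := rnk_injOn hl h1 h2 (le_refl 1) (by have : 1 ≤ 2^l := Nat.one_le_two_pow; omega)
    (h.trans root_rnk.symm)
  exact this

lemma rnk_eq' {l a : ℕ} (hl : 1 ≤ l) (h1 : 1 ≤ a) (h2 : a ≤ 2 ^ l - 1) :
    ∃ k α : ℕ, Nat.log 2 a = k ∧ k ≤ l - 1 ∧ α < 2 ^ k ∧ a = 2 ^ k + α ∧
      rnk l a + 1 = (2 * α + 1) * 2 ^ (l - 1 - k) ∧ rnk l a + 1 ≤ 2 ^ l - 1 := by
  obtain ⟨hk, hα, hla, hr, hb⟩ := rnk_eq hl h1 h2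
  exact ⟨Nat.log 2 a, a - 2 ^ Nat.log 2 a, rfl, hk, hα, by omega, hr, hb⟩

/-- consecutive in-order ranks are at hypertree distance at most `l - 1`. -/
lemma dist_consecutive {l : ℕ} (hl : 1 ≤ l) (x y : Fin (2^l - 1))
    (h : rnk l (y.val + 1) = rnk l (x.val + 1) + 1) :
    (hypertree l).dist x y ≤ l - 1 := by
  have hx2 : x.val + 1 ≤ 2 ^ l - 1 := by have := x.isLt; omega
  have hy2 : y.val + 1 ≤ 2 ^ l - 1 := by have := y.isLt; omega
  obtain ⟨ka, α, hkadef, hka, hαa, haeq, hra, hba⟩ := rnk_eq' hl (by omega) hx2 (a := x.val + 1)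
  obtain ⟨kb, β, hkbdef, hkb, hαb, hbeq, hrb, hbb⟩ := rnk_eq' hl (by omega) hy2 (a := y.val + 1)
  rcases Nat.eq_zero_or_pos (l - 1 - ka) with hja | hja
  · -- x is a leaf, y is its ancestor at height i = l-1-kb
    rw [hja, pow_zero, mul_one] at hra
    have hkaeq : ka = l - 1 := by omega
    subst hkaeq
    have hrb2 : (2*β+1) * 2^(l-1-kb) = 2*α + 2 := by omega
    set i := l - 1 - kb with hidef
    rcases Nat.eq_zero_or_pos i with hjb | hjb
    · rw [hjb] at hrb2; simp at hrb2; omega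
    · have hE : 2 ^ i = 2 * 2 ^ (i-1) := by
        have hpp := pow_succ 2 (i-1)
        have hh : i - 1 + 1 = i := by omega
        rw [hh] at hpp; omega
      have e1 : (2*β+1) * 2^i = 2*(β*2^i) + 2^i := by ring
      have hα : α = β * 2^i + 2^(i-1) - 1 := by omega
      have hkbeq : kb = l - 1 - i := by omega
      have hEk : 2^(l-1-i) * 2^i = 2^(l-1) := by
        rw [← pow_add]; congr 1; omega
      have e2 : (2^(l-1-i) + β) * 2^i = 2^(l-1) + β*2^i := by rw [add_mul, hEk]
      have e3 : (2^(l-1-i) + β + 1) * 2^i = 2^(l-1) + β*2^i + 2^i := by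
        rw [add_mul, add_mul, hEk, one_mul]
      have h2i : 1 ≤ 2^(i-1) := Nat.one_le_two_pow
      have hdiv : y.val + 1 = (x.val + 1) / 2 ^ i := by
        have hq : (x.val + 1) / 2^i = 2^(l-1-i) + β := by
          apply Nat.div_eq_of_lt_le
          · rw [e2]; omega
          · rw [show (2^(l-1-i) + β + 1) = (2^(l-1-i) + β) + 1 from rfl] at e3
            rw [e3]; omega
        rw [hq, ← hkbeq]
        omega
      rw [SimpleGraph.dist_comm]
      exact le_trans (DilAux.dist_up x y i hdiv) (by omega)
  · -- y is a leaf, x is its ancestor at height j = l-1-ka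
    set j := l - 1 - ka with hjdef
    have hrb2 : (2*β+1) * 2^(l-1-kb) = (2*α+1) * 2^j + 1 := by omega
    have hjb : l - 1 - kb = 0 := by
      by_contra hc
      have hd1 : 2 ∣ (2*β+1) * 2^(l-1-kb) := Dvd.dvd.mul_left (dvd_pow_self 2 hc) _
      have hd2 : 2 ∣ (2*α+1) * 2^j := Dvd.dvd.mul_left (dvd_pow_self 2 (by omega)) _
      omega
    rw [hjb, pow_zero, mul_one] at hrb2
    have hkbeq : kb = l - 1 := by omega
    subst hkbeq
    have hE : 2 ^ j = 2 * 2 ^ (j-1) := by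
      have hpp := pow_succ 2 (j-1)
      have hh : j - 1 + 1 = j := by omega
      rw [hh] at hpp; omega
    have e1 : (2*α+1) * 2^j = 2*(α*2^j) + 2^j := by ring
    have hβ : β = α * 2^j + 2^(j-1) := by omega
    have hkaeq : ka = l - 1 - j := by omega
    have hEk : 2^(l-1-j) * 2^j = 2^(l-1) := by
      rw [← pow_add]; congr 1; omega
    have e2 : (2^(l-1-j) + α) * 2^j = 2^(l-1) + α*2^j := by rw [add_mul, hEk]
    have e3 : (2^(l-1-j) + α + 1) * 2^j = 2^(l-1) + α*2^j + 2^j := by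
      rw [add_mul, add_mul, hEk, one_mul]
    have h2j : 1 ≤ 2^(j-1) := Nat.one_le_two_pow
    have hdiv : x.val + 1 = (y.val + 1) / 2 ^ j := by
      have hq : (y.val + 1) / 2^j = 2^(l-1-j) + α := by
        apply Nat.div_eq_of_lt_le
        · rw [e2]; omega
        · rw [show (2^(l-1-j) + α + 1) = (2^(l-1-j) + α) + 1 from rfl] at e3
          rw [e3]; omega
      rw [hq, ← hkaeq]
      omega
    exact le_trans (DilAux.dist_up y x j hdiv) (by omega)

lemma pow_facts {l : ℕ} (hl : 3 ≤ l) :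
    2^l = 2 * 2^(l-1) ∧ 2^(l-1) = 2 * 2^(l-2) ∧ 4 ≤ 2^(l-1) ∧ 2 ≤ 2^(l-2) := by
  have h1 : 2^l = 2^(l-1) * 2 := by
    have h := pow_succ 2 (l-1); have hh : l - 1 + 1 = l := by omega
    rw [hh] at h; omega
  have h2 : 2^(l-1) = 2^(l-2) * 2 := by
    have h := pow_succ 2 (l-2); have hh : l - 2 + 1 = l - 1 := by omega
    rw [hh] at h; omega
  have h3 : (2:ℕ)^2 ≤ 2^(l-1) := Nat.pow_le_pow_right (by omega) (by omega)
  have h4 : (2:ℕ)^1 ≤ 2^(l-2) := Nat.pow_le_pow_right (by omega) (by omega)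
  norm_num at h3 h4
  exact ⟨by omega, by omega, h3, h4⟩

lemma pos_spec {l a : ℕ} (hl : 3 ≤ l) (h1 : 2 ≤ a) (h2 : a ≤ 2^l - 1) :
    (rnk l a ≤ 2^(l-1) - 2 ∧ pos l a = rnk l a + 1) ∨
    (2^(l-1) ≤ rnk l a ∧ rnk l a ≤ 2^l - 2 ∧ pos l a = 3 * 2^(l-1) - 2 - rnk l a) := by
  obtain ⟨hP1, hP2, hP3, hP4⟩ := pow_facts hl
  have hroot : rnk l a ≠ 2^(l-1) - 1 := fun hc => by
    have := root_of_rnk (by omega) (by omega) h2 hc; omega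
  obtain ⟨-, -, -, -, hb⟩ := rnk_eq (l := l) (by omega) (by omega) h2
  unfold pos
  rw [if_neg (by omega : ¬ a ≤ 1)]
  split_ifs with h
  · left; omega
  · right; omega

lemma pos_pos {l a : ℕ} (hl : 3 ≤ l) (h1 : 2 ≤ a) (h2 : a ≤ 2^l - 1) :
    1 ≤ pos l a := by
  obtain ⟨hP1, hP2, hP3, hP4⟩ := pow_facts hl
  rcases pos_spec hl h1 h2 with ⟨h, hp⟩ | ⟨h, h', hp⟩ <;> omega

lemma pos_lt {l a : ℕ} (hl : 3 ≤ l) (h1 : 1 ≤ a) (h2 : a ≤ 2^l - 1) :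
    pos l a < 2^l - 1 := by
  obtain ⟨hP1, hP2, hP3, hP4⟩ := pow_facts hl
  rcases Nat.lt_or_ge a 2 with h | h
  · unfold pos; rw [if_pos (by omega)]; omega
  · rcases pos_spec hl h h2 with ⟨hr, hp⟩ | ⟨hr, hr', hp⟩ <;> omega

lemma pos_inj {l a b : ℕ} (hl : 3 ≤ l) (ha1 : 1 ≤ a) (ha2 : a ≤ 2^l - 1)
    (hb1 : 1 ≤ b) (hb2 : b ≤ 2^l - 1) (h : pos l a = pos l b) : a = b := by
  obtain ⟨hP1, hP2, hP3, hP4⟩ := pow_facts hl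
  rcases Nat.lt_or_ge a 2 with ha | ha <;> rcases Nat.lt_or_ge b 2 with hb | hb
  · omega
  · have h1 : pos l a = 0 := by unfold pos; rw [if_pos (by omega)]
    have := pos_pos hl hb hb2; omega
  · have h1 : pos l b = 0 := by unfold pos; rw [if_pos (by omega)]
    have := pos_pos hl ha ha2; omega
  · have : rnk l a = rnk l b := by
      rcases pos_spec hl ha ha2 with ⟨hr, hp⟩ | ⟨hr, hr', hp⟩ <;>
        rcases pos_spec hl hb hb2 with ⟨hs, hq⟩ | ⟨hs, hs', hq⟩ <;> omega
    exact rnk_injOn (by omega) (by omega) ha2 (by omega) hb2 this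

lemma horiz_adj {l t : ℕ} (hl : 3 ≤ l) (ht : t < 2^(l-2)) :
    htAdjLbl (2^(l-1) + t) (2^(l-1) + 2^(l-2) + t) := by
  obtain ⟨hP1, hP2, hP3, hP4⟩ := pow_facts hl
  right
  have hlog1 : Nat.log 2 (2^(l-1) + t) = l - 1 := log2_pow_add (by omega)
  have hlog2 : Nat.log 2 (2^(l-1) + 2^(l-2) + t) = l - 1 := by
    have : 2^(l-1) + 2^(l-2) + t = 2^(l-1) + (2^(l-2) + t) := by omega
    rw [this]
    exact log2_pow_add (by omega)
  refine ⟨by omega, by rw [hlog1, hlog2], by rw [hlog1]; omega, ?_⟩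
  rw [hlog1]
  rw [max_eq_right (by omega), min_eq_left (by omega)]
  have : l - 1 - 1 = l - 2 := by omega
  rw [this]
  omega

lemma dist_from_root {l : ℕ} (hl : 3 ≤ l) (x y : Fin (2^l - 1)) (hx : x.val = 0) :
    (hypertree l).dist x y ≤ l - 1 := by
  have h1 := Nat.pow_log_le_self 2 (by omega : y.val + 1 ≠ 0)
  have h2 := Nat.lt_pow_succ_log_self (by omega : 1 < 2) (y.val + 1)
  rw [pow_succ] at h2
  have hdiv : x.val + 1 = (y.val + 1) / 2 ^ (Nat.log 2 (y.val+1)) := by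
    have h3 : (y.val + 1) / 2 ^ (Nat.log 2 (y.val + 1)) = 1 :=
      Nat.div_eq_of_lt_le (by omega) (by omega)
    omega
  have hlog : Nat.log 2 (y.val + 1) ≤ l - 1 := by
    have hy : y.val + 1 < 2 ^ l := by have := y.isLt; omega
    have := log2_le (by omega : 1 ≤ y.val + 1) hy
    omega
  exact le_trans (dist_up y x _ hdiv) hlog

lemma dist_le_one {l : ℕ} (x y : Fin (2^l - 1)) (h : htAdjLbl (x.val+1) (y.val+1)) :
    (hypertree l).dist x y ≤ 1 := by
  have hadj : (hypertree l).Adj x y := h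
  exact SimpleGraph.dist_le (Walk.cons hadj Walk.nil)

lemma rim_succ {l : ℕ} (hl : 3 ≤ l) (x y : Fin (2^l - 1))
    (hx : 1 ≤ pos l (x.val + 1))
    (h : pos l (y.val + 1) = pos l (x.val + 1) + 1) :
    (hypertree l).dist x y ≤ l - 1 := by
  obtain ⟨hP1, hP2, hP3, hP4⟩ := pow_facts hl
  have hx2 : x.val + 1 ≤ 2 ^ l - 1 := by have := x.isLt; omega
  have hy2 : y.val + 1 ≤ 2 ^ l - 1 := by have := y.isLt; omega
  have ha2 : 2 ≤ x.val + 1 := by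
    by_contra hc
    have : pos l (x.val+1) = 0 := by unfold pos; rw [if_pos (by omega)]
    omega
  have hb2 : 2 ≤ y.val + 1 := by
    by_contra hc
    have : pos l (y.val+1) = 0 := by unfold pos; rw [if_pos (by omega)]
    omega
  rcases pos_spec hl ha2 hx2 with ⟨hr, hp⟩ | ⟨hr, hr', hp⟩ <;>
    rcases pos_spec hl hb2 hy2 with ⟨hs, hq⟩ | ⟨hs, hs', hq⟩
  · -- both in left part : consecutive ranks
    exact dist_consecutive (by omega) x y (by omega)
  · -- crossing pair
    have hrx : rnk l (x.val+1) = 2 * (2^(l-2) - 1) := by omega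
    have hry : rnk l (y.val+1) = 2 * (2^(l-1) - 1) := by omega
    have hxa := label_of_even_rnk (l := l) (by omega) (by omega) hx2 hrx
    have hya := label_of_even_rnk (l := l) (by omega) (by omega) hy2 hry
    have hadj := horiz_adj hl (by omega : 2^(l-2) - 1 < 2^(l-2))
    have hxa' : x.val + 1 = 2^(l-1) + (2^(l-2) - 1) := hxa
    have hya' : y.val + 1 = 2^(l-1) + 2^(l-2) + (2^(l-2) - 1) := by omega
    have := dist_le_one x y (by rw [hxa', hya']; exact hadj)
    omega
  · omega
  · -- both in right part : consecutive ranks reversed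
    rw [SimpleGraph.dist_comm]
    exact dist_consecutive (by omega) y x (by omega)

lemma rim_wrap {l : ℕ} (hl : 3 ≤ l) (x y : Fin (2^l - 1))
    (hx : pos l (x.val + 1) = 1) (hy : pos l (y.val + 1) = 2^l - 2) :
    (hypertree l).dist x y ≤ l - 1 := by
  obtain ⟨hP1, hP2, hP3, hP4⟩ := pow_facts hl
  have hx2 : x.val + 1 ≤ 2 ^ l - 1 := by have := x.isLt; omega
  have hy2 : y.val + 1 ≤ 2 ^ l - 1 := by have := y.isLt; omega
  have ha2 : 2 ≤ x.val + 1 := by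
    by_contra hc
    have : pos l (x.val+1) = 0 := by unfold pos; rw [if_pos (by omega)]
    omega
  have hb2 : 2 ≤ y.val + 1 := by
    by_contra hc
    have : pos l (y.val+1) = 0 := by unfold pos; rw [if_pos (by omega)]
    omega
  have hrx : rnk l (x.val+1) = 2 * 0 := by
    rcases pos_spec hl ha2 hx2 with ⟨hr, hp⟩ | ⟨hr, hr', hp⟩ <;> omega
  have hry : rnk l (y.val+1) = 2 * 2^(l-2) := by
    rcases pos_spec hl hb2 hy2 with ⟨hr, hp⟩ | ⟨hr, hr', hp⟩ <;> omega
  have hxa := label_of_even_rnk (l := l) (by omega) (by omega) hx2 hrx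
  have hya := label_of_even_rnk (l := l) (by omega) (by omega) hy2 hry
  have hadj := horiz_adj hl (by omega : 0 < 2^(l-2))
  have hxa' : x.val + 1 = 2^(l-1) + 0 := by omega
  have hya' : y.val + 1 = 2^(l-1) + 2^(l-2) + 0 := by omega
  have := dist_le_one x y (by rw [hxa', hya']; exact hadj)
  omega

end DilAux

/-- bit `i` of `a` as a natural number. -/
def bitv (a i : ℕ) : ℕ := a / 2 ^ i % 2

def potF (c0 c1 k s0 s1 : ℕ) : ℤ :=
  (if k = 0 ∨ s0 = c0 then 1 else 0) +
  (if k ≤ 1 ∨ s1 = c1 then (k : ℤ) + 1 else 3 - (k : ℤ))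

def pot (c0 c1 a : ℕ) : ℤ :=
  potF c0 c1 (Nat.log 2 a) (bitv a (Nat.log 2 a - 1)) (bitv a (Nat.log 2 a - 2))

lemma bitv_double {a e : ℕ} (i : ℕ) (he : e ≤ 1) : bitv (2*a+e) (i+1) = bitv a i := by
  unfold bitv
  rw [pow_succ, mul_comm (2^i) 2, ← Nat.div_div_eq_div_mul]
  congr 2
  omega

lemma log2_double {a e : ℕ} (ha : 1 ≤ a) (he : e ≤ 1) :
    Nat.log 2 (2*a+e) = Nat.log 2 a + 1 := by
  have h1 := Nat.pow_log_le_self 2 (by omega : a ≠ 0)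
  have h2 := Nat.lt_pow_succ_log_self (by omega : 1 < 2) a
  apply Nat.log_eq_of_pow_le_of_lt_pow
  · rw [pow_succ]; omega
  · rw [pow_succ, pow_succ]; omega

lemma pot_tree (c0 c1 a e : ℕ) (ha : 1 ≤ a) (he : e ≤ 1) :
    |pot c0 c1 a - pot c0 c1 (2*a+e)| ≤ 1 := by
  have hlog := log2_double ha he
  set k := Nat.log 2 a with hk
  rcases Nat.lt_or_ge k 2 with hk2 | hk2
  · interval_cases k
    · -- a = 1
      have ha1 : a = 1 := by
        have h1 := Nat.pow_log_le_self 2 (by omega : a ≠ 0)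
        have h2 := Nat.lt_pow_succ_log_self (by omega : 1 < 2) a
        rw [← hk] at h1 h2; simp at h1 h2; omega
      subst ha1
      have hb0 : bitv (2*1+e) 0 = e := by unfold bitv; simp; omega
      simp only [pot, hlog, potF, ← hk]
      norm_num [hb0]
      split_ifs <;> (rw [abs_le]; constructor <;> omega)
    · -- k = 1
      have hb1 : bitv (2*a+e) 1 = bitv a 0 := bitv_double 0 he
      have hb0 : bitv (2*a+e) 0 = e := by unfold bitv; simp; omega
      simp only [pot, hlog, potF, ← hk]
      norm_num [hb1, hb0]
      split_ifs <;> (rw [abs_le]; constructor <;> omega)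
  · have hb1 : bitv (2*a+e) (k+1-1) = bitv a (k-1) := by
      have : k + 1 - 1 = (k-1) + 1 := by omega
      rw [this, bitv_double _ he]
    have hb2 : bitv (2*a+e) (k+1-2) = bitv a (k-2) := by
      have : k + 1 - 2 = (k-2) + 1 := by omega
      rw [this, bitv_double _ he]
    simp only [pot, hlog, ← hk, hb1, hb2, potF]
    have hk0 : ¬ (k = 0) := by omega
    have hk10 : ¬ (k + 1 = 0) := by omega
    have hk1 : ¬ (k ≤ 1) := by omega
    have hk11 : ¬ (k + 1 ≤ 1) := by omega
    simp only [hk0, hk10, hk1, hk11, false_or]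
    push_cast
    split_ifs <;> (rw [abs_le]; constructor <;> omega)

lemma pot_horiz (c0 c1 a b : ℕ) (ha : 1 ≤ a) (hab : a < b)
    (hlog : Nat.log 2 a = Nat.log 2 b) (hk1 : 1 ≤ Nat.log 2 a)
    (hd : b - a = 2 ^ (Nat.log 2 a - 1)) :
    |pot c0 c1 a - pot c0 c1 b| ≤ 1 := by
  have h1 := Nat.pow_log_le_self 2 (by omega : a ≠ 0)
  have h2 := Nat.lt_pow_succ_log_self (by omega : 1 < 2) b
  rw [← hlog] at h2
  set k := Nat.log 2 a with hk
  have hpow : 2 ^ k = 2 * 2 ^ (k-1) := by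
    have h := pow_succ 2 (k-1)
    rw [Nat.sub_add_cancel hk1] at h
    omega
  have hpows : 2 ^ (k+1) = 4 * 2 ^ (k-1) := by rw [pow_succ]; omega
  -- a / 2^(k-1) = 2, b / 2^(k-1) = 3
  have hda : a / 2 ^ (k-1) = 2 := Nat.div_eq_of_lt_le (by omega) (by omega)
  have hdb : b / 2 ^ (k-1) = 3 := Nat.div_eq_of_lt_le (by omega) (by omega)
  have hba : bitv a (k-1) = 0 := by unfold bitv; rw [hda]
  have hbb : bitv b (k-1) = 1 := by unfold bitv; rw [hdb]
  rcases Nat.lt_or_ge k 2 with hsmall | hbig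
  · have h1le : k ≤ 1 := by omega
    simp only [pot, ← hlog, ← hk, potF, hba, hbb, if_pos (Or.inl h1le)]
    split_ifs <;> (rw [abs_le]; constructor <;> omega)
  · have hsame : bitv a (k-2) = bitv b (k-2) := by
      unfold bitv
      have hb' : b = a + 2 ^ (k-2) * 2 := by
        have h := pow_succ 2 (k-2)
        have hh : k - 2 + 1 = k - 1 := by omega
        rw [hh] at h
        omega
      rw [hb', Nat.add_mul_div_left _ _ (by positivity)]
      omega
    simp only [pot, ← hlog, ← hk, potF, hba, hbb, hsame]
    split_ifs <;> (rw [abs_le]; constructor <;> omega)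

lemma pot_adj (c0 c1 : ℕ) {a b : ℕ} (ha : 1 ≤ a) (hb : 1 ≤ b) (h : htAdjLbl a b) :
    |pot c0 c1 a - pot c0 c1 b| ≤ 1 := by
  rcases h with (h | h | h | h) | ⟨hne, hlog, hk1, hd⟩
  · have := pot_tree c0 c1 a 0 ha (by omega)
    simpa [h] using this
  · have := pot_tree c0 c1 a 1 ha (by omega)
    simpa [h] using this
  · have := pot_tree c0 c1 b 0 hb (by omega)
    rw [abs_sub_comm]
    simpa [h] using this
  · have := pot_tree c0 c1 b 1 hb (by omega)
    rw [abs_sub_comm]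
    simpa [h] using this
  · rcases Nat.lt_or_ge a b with hab | hab
    · refine pot_horiz c0 c1 a b ha hab hlog hk1 ?_
      rw [max_eq_right (le_of_lt hab), min_eq_left (le_of_lt hab)] at hd
      exact hd
    · have hba : b < a := by omega
      rw [abs_sub_comm]
      refine pot_horiz c0 c1 b a hb hba hlog.symm (hlog ▸ hk1) ?_
      rw [max_eq_left (le_of_lt hba), min_eq_right (le_of_lt hba)] at hd
      rw [← hlog]
      exact hd

lemma pot_walk (c0 c1 l : ℕ) {x y : Fin (2^l - 1)} (p : (hypertree l).Walk x y) :
    |pot c0 c1 (x.val + 1) - pot c0 c1 (y.val + 1)| ≤ (p.length : ℤ) := by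
  induction p with
  | nil => simp
  | @cons u v w h p ih =>
    have h1 : |pot c0 c1 (u.val+1) - pot c0 c1 (w.val+1)| ≤
        |pot c0 c1 (u.val+1) - pot c0 c1 (v.val+1)| +
        |pot c0 c1 (v.val+1) - pot c0 c1 (w.val+1)| := abs_sub_le _ _ _
    have h2 := pot_adj c0 c1 (Nat.le_add_left 1 u.val) (Nat.le_add_left 1 v.val) h
    simp only [Walk.length_cons]
    push_cast
    omega

lemma pot_dist (c0 c1 l : ℕ) (hl : 1 ≤ l) (x y : Fin (2^l - 1)) :
    |pot c0 c1 (x.val + 1) - pot c0 c1 (y.val + 1)| ≤ ((hypertree l).dist x y : ℤ) := by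
  obtain ⟨p, hp⟩ := (DilAux.ht_reachable hl x y).exists_walk_length_eq_dist
  rw [← hp]
  exact pot_walk c0 c1 l p

lemma bitv_le_one (a i : ℕ) : bitv a i ≤ 1 := by
  have := Nat.mod_lt (a / 2^i) (show 0 < 2 by omega)
  unfold bitv
  omega

lemma pot_start (c0 c1 a : ℕ) (ha : 1 ≤ a)
    (h0 : c0 ≠ bitv a (Nat.log 2 a - 1)) (h1 : c1 ≠ bitv a (Nat.log 2 a - 2)) :
    pot c0 c1 a ≤ 2 := by
  unfold pot potF
  split_ifs with hA hB hB
  · rcases hA with hA | hA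
    · rw [hA]; norm_num
    · exact absurd hA.symm h0
  · rcases hA with hA | hA
    · omega
    · exact absurd hA.symm h0
  · rcases hB with hB | hB
    · push_cast; omega
    · exact absurd hB.symm h1
  · push_cast
    have : 1 ≤ Nat.log 2 a := by omega
    omega

lemma pot_target (l c0 c1 : ℕ) (hl : 3 ≤ l) (h0 : c0 ≤ 1) (h1 : c1 ≤ 1) :
    pot c0 c1 (2^(l-1) + (c0 * 2^(l-2) + c1 * 2^(l-3))) = (l : ℤ) + 1 := by
  have hP : 2^(l-3) ≥ 1 := Nat.one_le_two_pow
  have e2 : 2^(l-2) = 2 * 2^(l-3) := by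
    have h := pow_succ 2 (l-3)
    have hh : l - 3 + 1 = l - 2 := by omega
    rw [hh] at h; omega
  have e1 : 2^(l-1) = 4 * 2^(l-3) := by
    have h := pow_succ 2 (l-2)
    have hh : l - 2 + 1 = l - 1 := by omega
    rw [hh] at h; omega
  have hlog : Nat.log 2 (2^(l-1) + (c0 * 2^(l-2) + c1 * 2^(l-3))) = l - 1 := by
    apply DilAux.log2_pow_add
    interval_cases c0 <;> interval_cases c1 <;> omega
  have hb0 : bitv (2^(l-1) + (c0 * 2^(l-2) + c1 * 2^(l-3))) (l-2) = c0 := by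
    unfold bitv
    have : (2^(l-1) + (c0 * 2^(l-2) + c1 * 2^(l-3))) / 2^(l-2) = 2 + c0 := by
      apply Nat.div_eq_of_lt_le <;>
        (interval_cases c0 <;> interval_cases c1 <;> omega)
    omega
  have hb1 : bitv (2^(l-1) + (c0 * 2^(l-2) + c1 * 2^(l-3))) (l-3) = c1 := by
    unfold bitv
    have : (2^(l-1) + (c0 * 2^(l-2) + c1 * 2^(l-3))) / 2^(l-3) = 4 + 2*c0 + c1 := by
      apply Nat.div_eq_of_lt_le <;>
        (interval_cases c0 <;> interval_cases c1 <;> omega)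
    omega
  have hs1 : l - 1 - 1 = l - 2 := by omega
  have hs2 : l - 1 - 2 = l - 3 := by omega
  unfold pot potF
  rw [hlog, hs1, hs2, hb0, hb1]
  rw [if_pos (Or.inr rfl), if_pos (Or.inr rfl)]
  push_cast
  omega

lemma target_vertex (l c0 c1 : ℕ) (hl : 3 ≤ l) (h0 : c0 ≤ 1) (h1 : c1 ≤ 1) :
    ∃ w : Fin (2^l - 1), w.val + 1 = 2^(l-1) + (c0 * 2^(l-2) + c1 * 2^(l-3)) := by
  have hP : 2^(l-3) ≥ 1 := Nat.one_le_two_pow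
  have e2 : 2^(l-2) = 2 * 2^(l-3) := by
    have h := pow_succ 2 (l-3)
    have hh : l - 3 + 1 = l - 2 := by omega
    rw [hh] at h; omega
  have e1 : 2^(l-1) = 4 * 2^(l-3) := by
    have h := pow_succ 2 (l-2)
    have hh : l - 2 + 1 = l - 1 := by omega
    rw [hh] at h; omega
  have e0 : 2^l = 8 * 2^(l-3) := by
    have h := pow_succ 2 (l-1)
    have hh : l - 1 + 1 = l := by omega
    rw [hh] at h; omega
  refine ⟨⟨2^(l-1) + (c0 * 2^(l-2) + c1 * 2^(l-3)) - 1, ?_⟩, ?_⟩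
  · interval_cases c0 <;> interval_cases c1 <;> omega
  · dsimp only; interval_cases c0 <;> interval_cases c1 <;> omega

lemma lower_main {l : ℕ} (hl : 3 ≤ l) (v0 : Fin (2^l - 1)) :
    ∃ w : Fin (2^l - 1), w ≠ v0 ∧ (l - 1 : ℕ) ≤ (hypertree l).dist v0 w := by
  have hb0 := bitv_le_one (v0.val+1) (Nat.log 2 (v0.val+1) - 1)
  have hb1 := bitv_le_one (v0.val+1) (Nat.log 2 (v0.val+1) - 2)
  obtain ⟨w, hwlab⟩ := target_vertex l (1 - bitv (v0.val+1) (Nat.log 2 (v0.val+1) - 1))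
    (1 - bitv (v0.val+1) (Nat.log 2 (v0.val+1) - 2)) hl (by omega) (by omega)
  set c0 := 1 - bitv (v0.val+1) (Nat.log 2 (v0.val+1) - 1) with hc0
  set c1 := 1 - bitv (v0.val+1) (Nat.log 2 (v0.val+1) - 2) with hc1
  have hptarget : pot c0 c1 (w.val + 1) = (l : ℤ) + 1 := by
    rw [hwlab]
    exact pot_target l c0 c1 hl (by omega) (by omega)
  have hpstart : pot c0 c1 (v0.val + 1) ≤ 2 :=
    pot_start c0 c1 (v0.val+1) (by omega) (by omega) (by omega)
  have hdist := pot_dist c0 c1 l (by omega) v0 w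
  rw [hptarget] at hdist
  refine ⟨w, ?_, ?_⟩
  · intro hwv
    rw [hwv] at hptarget
    omega
  · have h3 : -(pot c0 c1 (v0.val+1) - ((l:ℤ)+1)) ≤ |pot c0 c1 (v0.val+1) - ((l:ℤ)+1)| :=
      neg_le_abs _
    omega

theorem dil_wheel_hypertree (l n : ℕ) (hl : 3 ≤ l) (hn : n = 2 ^ l - 1) :
    (∀ f : Fin n ≃ Fin (2 ^ l - 1), ∃ u v : Fin n, (wheelGraph n).Adj u v ∧
      l - 1 ≤ (hypertree l).dist (f u) (f v)) ∧
    (∃ f : Fin n ≃ Fin (2 ^ l - 1), ∀ u v : Fin n, (wheelGraph n).Adj u v →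
      (hypertree l).dist (f u) (f v) ≤ l - 1) := by
  subst hn
  obtain ⟨hP1, hP2, hP3, hP4⟩ := DilAux.pow_facts hl
  have hn7 : 7 ≤ 2 ^ l - 1 := by omega
  constructor
  · -- lower bound
    intro f
    set hub : Fin (2^l - 1) := ⟨0, by omega⟩ with hhub
    obtain ⟨w, hwne, hwd⟩ := lower_main hl (f hub)
    refine ⟨hub, f.symm w, ⟨?_, Or.inl rfl⟩, ?_⟩
    · intro he
      apply hwne
      rw [he, Equiv.apply_symm_apply]
    · rw [Equiv.apply_symm_apply]
      exact hwd
  · -- upper bound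
    have hposlt : ∀ x : Fin (2^l - 1), DilAux.pos l (x.val+1) < 2^l - 1 := fun x =>
      DilAux.pos_lt hl (by omega) (by have := x.isLt; omega)
    set g : Fin (2^l - 1) → Fin (2^l - 1) := fun x => ⟨DilAux.pos l (x.val+1), hposlt x⟩
      with hgdef
    have hinj : Function.Injective g := by
      intro x y hxy
      have h1 : DilAux.pos l (x.val+1) = DilAux.pos l (y.val+1) := congrArg Fin.val hxy
      have h2 := DilAux.pos_inj hl (by omega) (by have := x.isLt; omega) (by omega)
        (by have := y.isLt; omega) h1
      exact Fin.ext (by omega)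
    have hbij : Function.Bijective g :=
      (Fintype.bijective_iff_injective_and_card g).mpr ⟨hinj, rfl⟩
    refine ⟨(Equiv.ofBijective g hbij).symm, ?_⟩
    intro u v huv
    set e := Equiv.ofBijective g hbij with hedef
    set x := e.symm u with hx
    set y := e.symm v with hy
    have hgu : DilAux.pos l (x.val + 1) = u.val := by
      have h1 : g x = u := e.apply_symm_apply u
      exact congrArg Fin.val h1
    have hgv : DilAux.pos l (y.val + 1) = v.val := by
      have h1 : g y = v := e.apply_symm_apply v
      exact congrArg Fin.val h1
    obtain ⟨hne, hcase⟩ := huv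
    have hroot : ∀ z : Fin (2^l - 1), DilAux.pos l (z.val + 1) = 0 → z.val = 0 := by
      intro z hz
      by_contra hc
      have h2 : 2 ≤ z.val + 1 := by omega
      have := DilAux.pos_pos hl h2 (by have := z.isLt; omega)
      omega
    rcases hcase with h | h | h | h | ⟨h1, h2⟩ | ⟨h1, h2⟩
    · exact DilAux.dist_from_root hl x y (hroot x (by omega))
    · rw [SimpleGraph.dist_comm]
      exact DilAux.dist_from_root hl y x (hroot y (by omega))
    · rcases Nat.eq_zero_or_pos u.val with h0 | h0
      · exact DilAux.dist_from_root hl x y (hroot x (by omega))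
      · exact DilAux.rim_succ hl x y (by omega) (by omega)
    · rcases Nat.eq_zero_or_pos v.val with h0 | h0
      · rw [SimpleGraph.dist_comm]
        exact DilAux.dist_from_root hl y x (hroot y (by omega))
      · rw [SimpleGraph.dist_comm]
        exact DilAux.rim_succ hl y x (by omega) (by omega)
    · exact DilAux.rim_wrap hl x y (by omega) (by omega)
    · rw [SimpleGraph.dist_comm]
      exact DilAux.rim_wrap hl y x (by omega) (by omega)
end

section
/- Let l ≥ 3 and n = 2^l − 1. Then dil(F_n, HT(l)) = l − 1: every bijection from the vertices of the fan F_n to the vertices of the hypertree HT(l) has some edge of F_n whose endpoint images are at distance at least l − 1 in HT(l), and there exists a bijection under which every edge of F_n maps to a pair of vertices at distance at most l − 1 in HT(l). -/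
open SimpleGraph

/-- Fan graph on `Fin n`: core `0`, path `1, …, n-1`. -/
def fanGraph (n : ℕ) : SimpleGraph (Fin n) where
  Adj x y := x ≠ y ∧ (x.val = 0 ∨ y.val = 0 ∨ y.val = x.val + 1 ∨ x.val = y.val + 1)
  symm := by constructor; rintro x y ⟨h1, h2⟩; exact ⟨h1.symm, by tauto⟩
  loopless := by constructor; rintro x ⟨h1, -⟩; exact h1 rfl

namespace DilFH

/-- Potential: distance to the leftmost leaf `2^(l-1)` in `HT(l)`. -/
def phi (l a : ℕ) : ℕ :=
  if Nat.log 2 a = 0 then l - 1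
  else (l - 1 - Nat.log 2 a) + a / 2 ^ (Nat.log 2 a - 1) % 2 +
    (if a % 2 ^ (Nat.log 2 a - 1) = 0 then 0
     else 2 + 2 * Nat.log 2 (a % 2 ^ (Nat.log 2 a - 1)))

lemma log2_double {r : ℕ} (hr : 1 ≤ r) (c : ℕ) (hc : c ≤ 1) :
    Nat.log 2 (2 * r + c) = Nat.log 2 r + 1 := by
  have h1 : 2 ^ Nat.log 2 r ≤ r := Nat.pow_log_le_self 2 (by omega)
  have h2 : r < 2 ^ (Nat.log 2 r + 1) := Nat.lt_pow_succ_log_self (by norm_num) r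
  refine Nat.log_eq_of_pow_le_of_lt_pow ?_ ?_
  · rw [pow_succ]; omega
  · rw [pow_succ, pow_succ]; omega

lemma phi_eq (l t c1 r : ℕ) (ht : 1 ≤ t) (hc : c1 ≤ 1) (hr : r < 2 ^ (t - 1)) :
    phi l (2 ^ t + c1 * 2 ^ (t - 1) + r)
      = (l - 1 - t) + c1 + (if r = 0 then 0 else 2 + 2 * Nat.log 2 r) := by
  set a := 2 ^ t + c1 * 2 ^ (t - 1) + r with ha
  have hP : 0 < 2 ^ (t - 1) := pow_pos (by norm_num) _
  have h2t : 2 ^ t = 2 * 2 ^ (t - 1) := by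
    rw [← pow_succ']; congr 1; omega
  have h2t1 : 2 ^ (t + 1) = 4 * 2 ^ (t - 1) := by
    rw [show t + 1 = (t - 1) + 2 by omega, pow_add]; ring
  have hlog : Nat.log 2 a = t := by
    refine Nat.log_eq_of_pow_le_of_lt_pow (by omega) ?_
    have hcP : c1 * 2 ^ (t - 1) ≤ 2 ^ (t - 1) := by
      calc c1 * 2 ^ (t - 1) ≤ 1 * 2 ^ (t - 1) := Nat.mul_le_mul_right _ hc
        _ = 2 ^ (t - 1) := one_mul _
    rw [ha, h2t1]; omega
  have haeq : a = 2 ^ (t - 1) * (2 + c1) + r := by rw [ha, h2t]; ring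
  have hdiv : a / 2 ^ (t - 1) = 2 + c1 := by
    rw [haeq, Nat.mul_add_div hP, Nat.div_eq_of_lt hr]
    omega
  have hmod : a % 2 ^ (t - 1) = r := by
    rw [haeq, Nat.mul_add_mod, Nat.mod_eq_of_lt hr]
  rw [phi, if_neg (by omega), hlog, hdiv, hmod]
  have : (2 + c1) % 2 = c1 := by omega
  rw [this]

lemma decomp (a : ℕ) (ha : 2 ≤ a) : ∃ c1 r, c1 ≤ 1 ∧ r < 2 ^ (Nat.log 2 a - 1) ∧
    a = 2 ^ (Nat.log 2 a) + c1 * 2 ^ (Nat.log 2 a - 1) + r := by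
  set t := Nat.log 2 a with htdef
  have ht : 1 ≤ t := Nat.log_pos (by norm_num) ha
  have hP : 0 < 2 ^ (t - 1) := pow_pos (by norm_num) _
  have h2t : 2 ^ t = 2 * 2 ^ (t - 1) := by rw [← pow_succ']; congr 1; omega
  have h2t1 : 2 ^ (t + 1) = 4 * 2 ^ (t - 1) := by
    rw [show t + 1 = (t - 1) + 2 by omega, pow_add]; ring
  have h1 : 2 ^ t ≤ a := Nat.pow_log_le_self 2 (by omega)
  have h2 : a < 2 ^ (t + 1) := Nat.lt_pow_succ_log_self (by norm_num) a
  have hq2 : 2 ≤ a / 2 ^ (t - 1) := (Nat.le_div_iff_mul_le hP).2 (by omega)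
  have hq4 : a / 2 ^ (t - 1) < 4 := (Nat.div_lt_iff_lt_mul hP).2 (by omega)
  have hmod := Nat.div_add_mod a (2 ^ (t - 1))
  have hmlt : a % 2 ^ (t - 1) < 2 ^ (t - 1) := Nat.mod_lt _ hP
  refine ⟨a / 2 ^ (t - 1) - 2, a % 2 ^ (t - 1), by omega, hmlt, ?_⟩
  interval_cases h : a / 2 ^ (t - 1) <;> simp at h ⊢ <;> omega



lemma phi_one (l : ℕ) : phi l 1 = l - 1 := by simp [phi]

lemma phi_child (l a c : ℕ) (ha : 1 ≤ a) (hc : c ≤ 1) (hb : 2 * a + c ≤ 2 ^ l - 1) :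
    phi l a ≤ phi l (2 * a + c) + 1 ∧ phi l (2 * a + c) ≤ phi l a + 1 := by
  have hbl : 2 ^ l ≥ 2 * a + c + 1 := by
    have : 0 < 2 ^ l := pow_pos (by norm_num) _
    omega
  rcases eq_or_lt_of_le ha with h1 | h2
  · -- a = 1
    have ha1 : a = 1 := h1.symm
    subst ha1
    have hb2 : 2 * 1 + c = 2 ^ 1 + c * 2 ^ (1 - 1) + 0 := by norm_num
    rw [hb2, phi_eq l 1 c 0 le_rfl hc (by norm_num), phi_one]
    have hl2 : 2 ≤ l := by
      by_contra hcon
      push_neg at hcon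
      interval_cases l <;> norm_num at hbl <;> omega
    simp; omega
  · -- 2 ≤ a
    set t := Nat.log 2 a with htdef
    have ht : 1 ≤ t := Nat.log_pos (by norm_num) h2
    obtain ⟨c1, r, hc1, hr, hdec⟩ := decomp a h2
    rw [← htdef] at hdec hr
    have h2t : 2 ^ t = 2 * 2 ^ (t - 1) := by rw [← pow_succ']; congr 1; omega
    have h2t1 : 2 ^ (t + 1) = 2 * 2 ^ t := by rw [pow_succ]; ring
    have hbdec : 2 * a + c = 2 ^ (t + 1) + c1 * 2 ^ t + (2 * r + c) := by
      rw [hdec, h2t1, h2t]; ring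
    have htl : t + 1 < l := by
      have hble : 2 ^ (t + 1) ≤ 2 * a + c := by omega
      have hlt : 2 ^ (t + 1) < 2 ^ l := by omega
      exact (Nat.pow_lt_pow_iff_right (by norm_num)).1 hlt
    have hrb : 2 * r + c < 2 ^ ((t + 1) - 1) := by
      simp only [Nat.add_sub_cancel]; omega
    have key := phi_eq l (t + 1) c1 (2 * r + c) (by omega) hc1 hrb
    simp only [Nat.add_sub_cancel] at key
    rw [hbdec, key, hdec, phi_eq l t c1 r ht hc1 hr]
    rcases Nat.eq_zero_or_pos r with hr0 | hr1
    · subst hr0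
      rcases Nat.le_one_iff_eq_zero_or_eq_one.1 hc with hc0 | hc1'
      · subst hc0; simp; omega
      · subst hc1'; norm_num; omega
    · have hlogb : Nat.log 2 (2 * r + c) = Nat.log 2 r + 1 := log2_double hr1 c hc
      rw [if_neg (by omega), if_neg (by omega), hlogb]
      omega

lemma phi_horiz (l a b : ℕ) (ha : 1 ≤ a) (hab : a < b)
    (hlog : Nat.log 2 a = Nat.log 2 b) (ht : 1 ≤ Nat.log 2 a)
    (hd : b - a = 2 ^ (Nat.log 2 a - 1)) : phi l b = phi l a + 1 := by
  set t := Nat.log 2 a with htdef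
  have h2a : 2 ≤ a := by
    have h1 : 2 ^ t ≤ a := Nat.pow_log_le_self 2 (by omega)
    have : 2 ^ 1 ≤ 2 ^ t := Nat.pow_le_pow_right (by norm_num) ht
    omega
  obtain ⟨c1, r, hc1, hr, hdec⟩ := decomp a h2a
  rw [← htdef] at hdec hr
  have h2t : 2 ^ t = 2 * 2 ^ (t - 1) := by rw [← pow_succ']; congr 1; omega
  have h2t1 : 2 ^ (t + 1) = 2 * 2 ^ t := by rw [pow_succ]; ring
  have hblt : b < 2 ^ (t + 1) := by
    have := Nat.lt_pow_succ_log_self (b := 2) (by norm_num) b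
    rw [← hlog] at this; exact this
  have hc10 : c1 = 0 := by
    rcases Nat.le_one_iff_eq_zero_or_eq_one.1 hc1 with h | h
    · exact h
    · exfalso; subst h; omega
  subst hc10
  have hbdec : b = 2 ^ t + 1 * 2 ^ (t - 1) + r := by omega
  rw [hdec, hbdec, phi_eq l t 0 r ht (by norm_num) hr,
    phi_eq l t 1 r ht le_rfl hr]
  omega

lemma phi_lip (l a b : ℕ) (ha : 1 ≤ a) (hb : 1 ≤ b)
    (ha2 : a ≤ 2 ^ l - 1) (hb2 : b ≤ 2 ^ l - 1) (h : htAdjLbl a b) :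
    phi l a ≤ phi l b + 1 ∧ phi l b ≤ phi l a + 1 := by
  rcases h with (h1 | h1 | h1 | h1) | ⟨hne, hlog, ht, hd⟩
  · subst h1
    have := phi_child l a 0 ha (by norm_num) (by omega)
    simpa using this
  · subst h1; exact phi_child l a 1 ha (by norm_num) (by omega)
  · subst h1
    have := (phi_child l b 0 hb (by norm_num) (by omega)).symm
    simpa using this
  · subst h1; exact (phi_child l b 1 hb (by norm_num) (by omega)).symm
  · rcases Nat.lt_or_ge a b with hab | hab
    · rw [max_eq_right hab.le, min_eq_left hab.le] at hd
      have := phi_horiz l a b ha hab hlog ht hd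
      omega
    · have hba : b < a := by omega
      rw [max_eq_left hab, min_eq_right hab] at hd
      rw [hlog] at hd ht
      have := phi_horiz l b a hb hba hlog.symm ht hd
      omega



lemma pow_l_big {l : ℕ} (hl : 3 ≤ l) : 8 ≤ 2 ^ l := by
  calc (8:ℕ) = 2 ^ 3 := by norm_num
    _ ≤ 2 ^ l := Nat.pow_le_pow_right (by norm_num) hl

/-- Vertex of the hypertree with label `a` (for labels in range). -/
def vt (l : ℕ) (hl : 3 ≤ l) (a : ℕ) : Fin (2 ^ l - 1) :=
  if h : a - 1 < 2 ^ l - 1 then ⟨a - 1, h⟩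
  else ⟨0, by have := pow_l_big hl; omega⟩

lemma vt_val (l : ℕ) (hl : 3 ≤ l) (a : ℕ) (h1 : 1 ≤ a) (h2 : a ≤ 2 ^ l - 1) :
    (vt l hl a).val = a - 1 := by
  have := pow_l_big hl
  rw [vt, dif_pos (by omega)]

lemma vt_self (l : ℕ) (hl : 3 ≤ l) (x : Fin (2 ^ l - 1)) :
    vt l hl (x.val + 1) = x := by
  have hx := x.isLt
  apply Fin.ext
  rw [vt_val l hl _ (by omega) (by omega)]
  omega

lemma ht_adj_parent (l : ℕ) (hl : 3 ≤ l) (a : ℕ) (h2 : 2 ≤ a) (hr : a ≤ 2 ^ l - 1) :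
    (hypertree l).Adj (vt l hl a) (vt l hl (a / 2)) := by
  have hv1 := vt_val l hl a (by omega) hr
  have hv2 := vt_val l hl (a / 2) (by omega) (by omega)
  show htAdjLbl _ _
  rw [hv1, hv2, htAdjLbl]
  left; omega

lemma ht_adj_child (l : ℕ) (hl : 3 ≤ l) (a c : ℕ) (ha : 1 ≤ a) (hc : c ≤ 1)
    (hb : 2 * a + c ≤ 2 ^ l - 1) :
    (hypertree l).Adj (vt l hl (2 * a + c)) (vt l hl a) := by
  have hv1 := vt_val l hl (2 * a + c) (by omega) hb
  have hv2 := vt_val l hl a ha (by omega)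
  show htAdjLbl _ _
  rw [hv1, hv2, htAdjLbl]
  left; omega

lemma ht_adj_23 (l : ℕ) (hl : 3 ≤ l) :
    (hypertree l).Adj (vt l hl 2) (vt l hl 3) := by
  have h8 := pow_l_big hl
  have hv1 := vt_val l hl 2 (by omega) (by omega)
  have hv2 := vt_val l hl 3 (by omega) (by omega)
  show htAdjLbl _ _
  rw [hv1, hv2, show (2:ℕ) - 1 + 1 = 2 by norm_num, show (3:ℕ) - 1 + 1 = 3 by norm_num]
  have hl2 : Nat.log 2 2 = 1 := Nat.log_eq_of_pow_le_of_lt_pow (by norm_num) (by norm_num)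
  have hl3 : Nat.log 2 3 = 1 := Nat.log_eq_of_pow_le_of_lt_pow (by norm_num) (by norm_num)
  right
  refine ⟨by omega, by rw [hl2, hl3], by omega, by rw [hl2]; norm_num⟩

lemma reach_root (l : ℕ) (hl : 3 ≤ l) :
    ∀ a, 1 ≤ a → a ≤ 2 ^ l - 1 → (hypertree l).Reachable (vt l hl a) (vt l hl 1) := by
  intro a
  induction a using Nat.strong_induction_on with
  | _ a ih =>
    intro h1 h2
    rcases eq_or_lt_of_le h1 with h | h
    · rw [← h]
    · exact ((ht_adj_parent l hl a (by omega) h2).reachable).trans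
        (ih (a / 2) (by omega) (by omega) (by omega))

lemma ht_conn (l : ℕ) (hl : 3 ≤ l) : (hypertree l).Connected := by
  rw [connected_iff]
  refine ⟨fun x y => ?_, ⟨vt l hl 1⟩⟩
  have hx := reach_root l hl (x.val + 1) (by omega) (by have := x.isLt; omega)
  have hy := reach_root l hl (y.val + 1) (by omega) (by have := y.isLt; omega)
  rw [vt_self] at hx hy
  exact hx.trans hy.symm

lemma dist_adj {l : ℕ} {x y : Fin (2 ^ l - 1)} (h : (hypertree l).Adj x y) :
    (hypertree l).dist x y ≤ 1 := by
  have := SimpleGraph.dist_le h.toWalk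
  simpa using this

lemma dist_anc (l : ℕ) (hl : 3 ≤ l) :
    ∀ e x y : ℕ, 1 ≤ x → 2 ^ e * x ≤ y → y < 2 ^ e * x + 2 ^ e → y ≤ 2 ^ l - 1 →
      (hypertree l).dist (vt l hl y) (vt l hl x) ≤ e := by
  intro e
  induction e with
  | zero =>
    intro x y hx h1 h2 h3
    simp only [pow_zero, one_mul] at h1 h2
    have : y = x := by omega
    subst this
    simp [SimpleGraph.dist_self]
  | succ e ih =>
    intro x y hx h1 h2 h3
    have h2e : 1 ≤ 2 ^ e := Nat.one_le_two_pow
    have hxe : 1 ≤ 2 ^ e * x := Nat.mul_pos (by omega) hx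
    have heq : 2 ^ (e + 1) * x = 2 * (2 ^ e * x) := by rw [pow_succ]; ring
    have heq2 : 2 ^ (e + 1) = 2 * 2 ^ e := by rw [pow_succ]; ring
    have hy2 : 2 ≤ y := by omega
    calc (hypertree l).dist (vt l hl y) (vt l hl x)
        ≤ (hypertree l).dist (vt l hl y) (vt l hl (y / 2))
          + (hypertree l).dist (vt l hl (y / 2)) (vt l hl x) :=
          (ht_conn l hl).dist_triangle
      _ ≤ 1 + e := add_le_add (dist_adj (ht_adj_parent l hl y hy2 h3))
          (ih x (y / 2) hx (by omega) (by omega) (by omega))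
      _ = e + 1 := by omega

lemma dist_root (l : ℕ) (hl : 3 ≤ l) (a : ℕ) (h1 : 1 ≤ a) (h2 : a ≤ 2 ^ l - 1) :
    (hypertree l).dist (vt l hl a) (vt l hl 1) ≤ l - 1 := by
  have hp1 := Nat.pow_log_le_self 2 (show a ≠ 0 by omega)
  have hp2 := Nat.lt_pow_succ_log_self (b := 2) (by norm_num) a
  have heq : 2 ^ (Nat.log 2 a + 1) = 2 ^ Nat.log 2 a * 1 + 2 ^ Nat.log 2 a := by
    rw [pow_succ]; ring
  have hle := dist_anc l hl (Nat.log 2 a) 1 a le_rfl (by omega) (by omega) h2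
  have hpos : 0 < 2 ^ l := pow_pos (by norm_num) _
  have hlog : Nat.log 2 a < l := Nat.log_lt_of_lt_pow (by omega) (by omega)
  omega

lemma phi_walk (l : ℕ) {x y : Fin (2 ^ l - 1)} (w : (hypertree l).Walk x y) :
    phi l (x.val + 1) ≤ phi l (y.val + 1) + w.length := by
  induction w with
  | nil => simp
  | @cons u v z h p ih =>
    have hlip := phi_lip l (u.val + 1) (v.val + 1) (by omega) (by omega)
      (by have := u.isLt; omega) (by have := v.isLt; omega) h
    simp only [SimpleGraph.Walk.length_cons]
    omega

lemma phi_dist (l : ℕ) (hl : 3 ≤ l) (x y : Fin (2 ^ l - 1)) :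
    phi l (x.val + 1) ≤ phi l (y.val + 1) + (hypertree l).dist x y := by
  obtain ⟨w, hw⟩ := ((ht_conn l hl).preconnected x y).exists_walk_length_eq_dist
  rw [← hw]
  exact phi_walk l w

lemma phi_L (l : ℕ) (hl : 3 ≤ l) : phi l (2 ^ (l - 1)) = 0 := by
  have h : 2 ^ (l - 1) = 2 ^ (l - 1) + 0 * 2 ^ ((l - 1) - 1) + 0 := by ring
  rw [h, phi_eq l (l - 1) 0 0 (by omega) (by norm_num)
    (pow_pos (by norm_num) _)]
  simp

lemma phi_R (l : ℕ) (hl : 3 ≤ l) : phi l (2 ^ l - 1) = 2 * l - 3 := by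
  have e1 : 2 ^ l = 2 * 2 ^ (l - 1) := by
    rw [← pow_succ']; congr 1; omega
  have e2 : 2 ^ (l - 1) = 2 * 2 ^ (l - 2) := by
    rw [← pow_succ']; congr 1; omega
  have e3 : 2 ^ (l - 2) = 2 * 2 ^ (l - 3) := by
    rw [← pow_succ']; congr 1; omega
  have h23 : 1 ≤ 2 ^ (l - 3) := Nat.one_le_two_pow
  have hdec : 2 ^ l - 1 = 2 ^ (l - 1) + 1 * 2 ^ ((l - 1) - 1) + (2 ^ (l - 2) - 1) := by
    rw [show (l - 1) - 1 = l - 2 by omega]; omega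
  rw [hdec, phi_eq l (l - 1) 1 (2 ^ (l - 2) - 1) (by omega) le_rfl
    (by rw [show (l - 1) - 1 = l - 2 by omega]; omega)]
  rw [if_neg (by omega)]
  have hlogr : Nat.log 2 (2 ^ (l - 2) - 1) = l - 3 := by
    refine Nat.log_eq_of_pow_le_of_lt_pow (by omega) ?_
    rw [show (l - 3) + 1 = l - 2 by omega]; omega
  rw [hlogr]
  omega

/-- Postorder traversal of the complete binary subtree rooted at `x` of depth `d`. -/
def po : ℕ → ℕ → List ℕ
  | 0, x => [x]
  | d + 1, x => po d (2 * x) ++ (po d (2 * x + 1) ++ [x])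

lemma po_cons (d x : ℕ) : ∃ tl, po d x = (2 ^ d * x) :: tl := by
  induction d generalizing x with
  | zero => exact ⟨[], by simp [po]⟩
  | succ d ih =>
    obtain ⟨tl, htl⟩ := ih (2 * x)
    refine ⟨tl ++ (po d (2 * x + 1) ++ [x]), ?_⟩
    have : (2:ℕ) ^ d * (2 * x) = 2 ^ (d + 1) * x := by rw [pow_succ]; ring
    rw [po, htl, this]; simp

lemma po_concat (d x : ℕ) : ∃ init, po d x = init ++ [x] := by
  cases d with
  | zero => exact ⟨[], by simp [po]⟩
  | succ d => exact ⟨po d (2 * x) ++ po d (2 * x + 1), by simp [po]⟩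

lemma po_mem {d x y : ℕ} (h : y ∈ po d x) :
    ∃ e, e ≤ d ∧ 2 ^ e * x ≤ y ∧ y < 2 ^ e * x + 2 ^ e := by
  induction d generalizing x with
  | zero =>
    simp [po] at h
    subst h
    exact ⟨0, le_rfl, by simp, by simp⟩
  | succ d ih =>
    simp only [po, List.mem_append, List.mem_singleton] at h
    rcases h with h | h | h
    · obtain ⟨e, he, h1, h2⟩ := ih h
      have k1 : 2 ^ (e + 1) * x = 2 ^ e * (2 * x) := by rw [pow_succ]; ring
      have k2 : 2 ^ (e + 1) = 2 * 2 ^ e := by rw [pow_succ]; ring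
      exact ⟨e + 1, by omega, by omega, by omega⟩
    · obtain ⟨e, he, h1, h2⟩ := ih h
      have k1 : 2 ^ e * (2 * x + 1) = 2 ^ (e + 1) * x + 2 ^ e := by rw [pow_succ]; ring
      have k2 : 2 ^ (e + 1) = 2 * 2 ^ e := by rw [pow_succ]; ring
      exact ⟨e + 1, by omega, by omega, by omega⟩
    · subst h
      exact ⟨0, by omega, by simp, by simp⟩

lemma po_mem_ge {d x y : ℕ} (h : y ∈ po d x) : x ≤ y ∧ y < 2 ^ d * x + 2 ^ d := by
  obtain ⟨e, he, h1, h2⟩ := po_mem h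
  have k1 : 2 ^ e ≤ 2 ^ d := Nat.pow_le_pow_right (by norm_num) he
  have k2 : 2 ^ e * x ≤ 2 ^ d * x := Nat.mul_le_mul_right _ k1
  have k3 : 1 * x ≤ 2 ^ e * x := Nat.mul_le_mul_right _ Nat.one_le_two_pow
  omega

lemma no_overlap {x y e f : ℕ} (hx : 1 ≤ x) (h1 : 2 ^ e * (2 * x) ≤ y)
    (h2 : y < 2 ^ e * (2 * x) + 2 ^ e) (h3 : 2 ^ f * (2 * x + 1) ≤ y)
    (h4 : y < 2 ^ f * (2 * x + 1) + 2 ^ f) : False := by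
  rcases Nat.lt_trichotomy e f with h | h | h
  · have hef : 2 ^ e ≤ 2 ^ f := Nat.pow_le_pow_right (by norm_num) h.le
    have k1 : 2 ^ e * (2 * x) + 2 ^ e = 2 ^ e * (2 * x + 1) := by ring
    have k2 : 2 ^ e * (2 * x + 1) ≤ 2 ^ f * (2 * x + 1) := Nat.mul_le_mul_right _ hef
    omega
  · subst h
    have k1 : 2 ^ e * (2 * x) + 2 ^ e = 2 ^ e * (2 * x + 1) := by ring
    omega
  · have hef : 2 ^ (f + 1) ≤ 2 ^ e := Nat.pow_le_pow_right (by norm_num) h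
    have k1 : 2 ^ (f + 1) * (2 * x) = 2 ^ f * (4 * x) := by rw [pow_succ]; ring
    have k2 : 2 ^ (f + 1) * (2 * x) ≤ 2 ^ e * (2 * x) := Nat.mul_le_mul_right _ hef
    have k3 : 2 ^ f * (2 * x + 2) ≤ 2 ^ f * (4 * x) := Nat.mul_le_mul_left _ (by omega)
    have k4 : 2 ^ f * (2 * x + 2) = 2 ^ f * (2 * x + 1) + 2 ^ f := by ring
    omega

lemma po_nodup (d : ℕ) : ∀ x, 1 ≤ x → (po d x).Nodup := by
  induction d with
  | zero => intro x _; simp [po]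
  | succ d ih =>
    intro x hx
    simp only [po]
    refine List.Nodup.append (ih _ (by omega)) (List.Nodup.append (ih _ (by omega))
      (by simp) ?_) ?_
    · intro y hy hy'
      simp at hy'
      subst hy'
      have := (po_mem_ge hy).1
      omega
    · intro y hy hy'
      simp only [List.mem_append, List.mem_singleton] at hy'
      rcases hy' with hy' | hy'
      · obtain ⟨e, _, he1, he2⟩ := po_mem hy
        obtain ⟨f, _, hf1, hf2⟩ := po_mem hy'
        exact no_overlap hx he1 he2 hf1 hf2
      · subst hy'
        have := (po_mem_ge hy).1
        omega

lemma po_chain (l : ℕ) (hl : 3 ≤ l) :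
    ∀ d x, 2 ≤ x → d ≤ l - 2 → 2 ^ d * (x + 1) ≤ 2 ^ l →
    List.Chain' (fun a b => (hypertree l).dist (vt l hl a) (vt l hl b) ≤ l - 1) (po d x) := by
  intro d
  induction d with
  | zero => intro x _ _ _; simp [po, List.Chain']
  | succ d ih =>
    intro x hx hd hr
    have h2d : 1 ≤ 2 ^ d := Nat.one_le_two_pow
    have e1 : 2 ^ (d + 1) * (x + 1) = 2 ^ d * (2 * x + 2) := by rw [pow_succ]; ring
    have e2 : 2 ^ d * (2 * x + 2) = 2 ^ d * (2 * x + 1) + 2 ^ d := by ring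
    have e3 : 2 ^ d * (2 * x + 1) = 2 ^ d * (2 * x) + 2 ^ d := by ring
    have e4 : 2 ^ (d + 1) * x = 2 ^ d * (2 * x) := by rw [pow_succ]; ring
    have e5 : 2 ^ (d + 1) = 2 * 2 ^ d := by rw [pow_succ]; ring
    have hmul : 2 * x + 2 ≤ 2 ^ d * (2 * x + 2) := Nat.le_mul_of_pos_left _ h2d
    have e6 : 2 ^ d * (2 * x + 1 + 1) = 2 ^ d * (2 * x + 2) := by ring
    have hy1 : 2 ^ d * (2 * x + 1) ≤ 2 ^ l - 1 := by omega
    have hx1 : x ≤ 2 ^ l - 1 := by omega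
    have hx2 : 2 * x + 1 ≤ 2 ^ l - 1 := by omega
    have chain1 := ih (2 * x) (by omega) (by omega) (by omega)
    have chain2 := ih (2 * x + 1) (by omega) (by omega) (by omega)
    simp only [po, List.Chain']
    rw [List.isChain_append]
    refine ⟨chain1, ?_, ?_⟩
    · rw [List.isChain_append]
      refine ⟨chain2, List.isChain_singleton _, ?_⟩
      intro z hz w hw
      obtain ⟨init, hinit⟩ := po_concat d (2 * x + 1)
      rw [hinit, List.getLast?_concat] at hz
      simp at hz hw
      subst hz; subst hw
      have hadj := ht_adj_child l hl x 1 (by omega) le_rfl hx2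
      exact (dist_adj hadj).trans (by omega)
    · intro z hz w hw
      obtain ⟨init, hinit⟩ := po_concat d (2 * x)
      rw [hinit, List.getLast?_concat] at hz
      obtain ⟨tl, htl⟩ := po_cons d (2 * x + 1)
      rw [htl] at hw
      simp at hz hw
      subst hz; subst hw
      have hadj := ht_adj_child l hl x 0 (by omega) (by norm_num) (by omega)
      have hadj' : (hypertree l).Adj (vt l hl (2 * x)) (vt l hl x) := by
        simpa using hadj
      have hup := dist_anc l hl (d + 1) x (2 ^ d * (2 * x + 1)) (by omega)
        (by omega) (by omega) hy1
      calc (hypertree l).dist (vt l hl (2 * x)) (vt l hl (2 ^ d * (2 * x + 1)))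
          ≤ (hypertree l).dist (vt l hl (2 * x)) (vt l hl x)
            + (hypertree l).dist (vt l hl x) (vt l hl (2 ^ d * (2 * x + 1))) :=
            (ht_conn l hl).dist_triangle
        _ ≤ 1 + (d + 1) := add_le_add (dist_adj hadj')
            (by rw [SimpleGraph.dist_comm]; exact hup)
        _ ≤ l - 1 := by omega

/-- The Hamiltonian-ish ordering: root, then postorder of the two subtrees. -/
def fullList (l : ℕ) : List ℕ := 1 :: (po (l - 2) 2 ++ po (l - 2) 3)

lemma po_length (d : ℕ) : ∀ x, (po d x).length = 2 ^ (d + 1) - 1 := by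
  induction d with
  | zero => intro x; simp [po]
  | succ d ih =>
    intro x
    have h1 : 1 ≤ 2 ^ (d + 1) := Nat.one_le_two_pow
    have h2 : 2 ^ (d + 1 + 1) = 2 * 2 ^ (d + 1) := by rw [pow_succ]; ring
    simp [po, ih]
    omega

lemma full_length (l : ℕ) (hl : 3 ≤ l) : (fullList l).length = 2 ^ l - 1 := by
  have h1 : 1 ≤ 2 ^ (l - 2 + 1) := Nat.one_le_two_pow
  have h2 : 2 ^ l = 2 * 2 ^ (l - 2 + 1) := by
    rw [← pow_succ']; congr 1; omega
  simp [fullList, po_length]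
  omega

lemma e_four (l : ℕ) (hl : 3 ≤ l) : 2 ^ (l - 2) * 4 = 2 ^ l := by
  have h : (2:ℕ) ^ (l - 2) * 4 = 2 ^ (l - 2) * 2 ^ 2 := by norm_num
  rw [h, ← pow_add]; congr 1; omega

lemma full_mem (l : ℕ) (hl : 3 ≤ l) {y : ℕ} (h : y ∈ fullList l) :
    1 ≤ y ∧ y ≤ 2 ^ l - 1 := by
  have he := e_four l hl
  have h2d : 1 ≤ 2 ^ (l - 2) := Nat.one_le_two_pow
  simp only [fullList, List.mem_cons, List.mem_append] at h
  rcases h with h | h | h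
  · omega
  · have := po_mem_ge h
    omega
  · have := po_mem_ge h
    omega

lemma full_nodup (l : ℕ) (hl : 3 ≤ l) : (fullList l).Nodup := by
  rw [fullList, List.nodup_cons]
  constructor
  · intro h
    rcases List.mem_append.1 h with h' | h'
    · have := (po_mem_ge h').1; omega
    · have := (po_mem_ge h').1; omega
  · refine List.Nodup.append (po_nodup _ 2 (by omega)) (po_nodup _ 3 (by omega)) ?_
    intro y h1 h2
    obtain ⟨e, _, he1, he2⟩ := po_mem h1
    obtain ⟨f, _, hf1, hf2⟩ := po_mem h2
    exact no_overlap (x := 1) le_rfl (by simpa using he1) (by simpa using he2)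
      (by simpa using hf1) (by simpa using hf2)

lemma full_chain (l : ℕ) (hl : 3 ≤ l) :
    List.Chain' (fun a b => (hypertree l).dist (vt l hl a) (vt l hl b) ≤ l - 1)
      (fullList l) := by
  have he := e_four l hl
  have h2d : 1 ≤ 2 ^ (l - 2) := Nat.one_le_two_pow
  have e7 : 2 ^ (l - 2) * 2 = 2 ^ (l - 1) := by
    rw [← pow_succ]; congr 1; omega
  rw [fullList]; simp only [List.Chain']; rw [List.isChain_cons]
  constructor
  · intro y hy
    obtain ⟨tl, htl⟩ := po_cons (l - 2) 2
    rw [htl] at hy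
    simp at hy
    subst hy
    have hanc := dist_anc l hl (l - 1) 1 (2 ^ (l - 2) * 2) le_rfl
      (by omega) (by omega) (by omega)
    rw [SimpleGraph.dist_comm]
    exact hanc
  · rw [List.isChain_append]
    refine ⟨po_chain l hl (l - 2) 2 le_rfl le_rfl (by omega),
      po_chain l hl (l - 2) 3 (by omega) le_rfl (by omega), ?_⟩
    intro z hz w hw
    obtain ⟨init, hinit⟩ := po_concat (l - 2) 2
    rw [hinit, List.getLast?_concat] at hz
    obtain ⟨tl, htl⟩ := po_cons (l - 2) 3
    rw [htl] at hw
    simp at hz hw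
    subst hz; subst hw
    have hanc := dist_anc l hl (l - 2) 3 (2 ^ (l - 2) * 3) (by omega)
      (by omega) (by omega) (by omega)
    calc (hypertree l).dist (vt l hl 2) (vt l hl (2 ^ (l - 2) * 3))
        ≤ (hypertree l).dist (vt l hl 2) (vt l hl 3)
          + (hypertree l).dist (vt l hl 3) (vt l hl (2 ^ (l - 2) * 3)) :=
          (ht_conn l hl).dist_triangle
      _ ≤ 1 + (l - 2) := add_le_add (dist_adj (ht_adj_23 l hl))
          (by rw [SimpleGraph.dist_comm]; exact hanc)
      _ ≤ l - 1 := by omega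

end DilFH

set_option maxHeartbeats 2000000 in
open DilFH in
theorem dil_fan_hypertree (l n : ℕ) (hl : 3 ≤ l) (hn : n = 2 ^ l - 1) :
    (∀ f : Fin n ≃ Fin (2 ^ l - 1), ∃ u v : Fin n, (fanGraph n).Adj u v ∧
      l - 1 ≤ (hypertree l).dist (f u) (f v)) ∧
    (∃ f : Fin n ≃ Fin (2 ^ l - 1), ∀ u v : Fin n, (fanGraph n).Adj u v →
      (hypertree l).dist (f u) (f v) ≤ l - 1) := by
  subst hn
  have hN : 8 ≤ 2 ^ l := pow_l_big hl
  have h2l1 : 1 ≤ 2 ^ (l - 1) := Nat.one_le_two_pow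
  have e1 : 2 ^ l = 2 * 2 ^ (l - 1) := by rw [← pow_succ']; congr 1; omega
  constructor
  · -- lower bound
    intro f
    by_cases hphi : l - 1 ≤ phi l ((f ⟨0, by omega⟩).val + 1)
    · -- target: leftmost leaf
      have hval : (vt l hl (2 ^ (l - 1))).val + 1 = 2 ^ (l - 1) := by
        rw [vt_val l hl _ (by omega) (by omega)]; omega
      have h1 := phi_dist l hl (f ⟨0, by omega⟩) (vt l hl (2 ^ (l - 1)))
      have h2 : phi l ((vt l hl (2 ^ (l - 1))).val + 1) = 0 := by
        rw [hval]; exact phi_L l hl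
      have hd : l - 1 ≤ (hypertree l).dist (f ⟨0, by omega⟩) (vt l hl (2 ^ (l - 1))) := by
        omega
      have hne : (⟨0, by omega⟩ : Fin (2 ^ l - 1)) ≠ f.symm (vt l hl (2 ^ (l - 1))) := by
        intro h
        have hcT : f ⟨0, by omega⟩ = vt l hl (2 ^ (l - 1)) := by
          rw [h, Equiv.apply_symm_apply]
        have h0 := congrArg (fun z => (hypertree l).dist z (vt l hl (2 ^ (l - 1)))) hcT
        have h3 := SimpleGraph.dist_self (G := hypertree l) (v := vt l hl (2 ^ (l - 1)))
        omega
      have happ := Equiv.apply_symm_apply f (vt l hl (2 ^ (l - 1)))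
      refine ⟨⟨0, by omega⟩, f.symm (vt l hl (2 ^ (l - 1))), ⟨hne, Or.inl rfl⟩, ?_⟩
      have h2' := congrArg
        (fun z => (hypertree l).dist (f ⟨0, (by omega : (0:ℕ) < 2 ^ l - 1)⟩) z) happ
      omega
    · -- target: rightmost leaf
      have hval : (vt l hl (2 ^ l - 1)).val + 1 = 2 ^ l - 1 := by
        rw [vt_val l hl _ (by omega) (by omega)]; omega
      have h1 := phi_dist l hl (vt l hl (2 ^ l - 1)) (f ⟨0, by omega⟩)
      have h2 : phi l ((vt l hl (2 ^ l - 1)).val + 1) = 2 * l - 3 := by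
        rw [hval]; exact phi_R l hl
      rw [SimpleGraph.dist_comm] at h1
      have hd : l - 1 ≤ (hypertree l).dist (f ⟨0, by omega⟩) (vt l hl (2 ^ l - 1)) := by
        omega
      have hne : (⟨0, by omega⟩ : Fin (2 ^ l - 1)) ≠ f.symm (vt l hl (2 ^ l - 1)) := by
        intro h
        have hcT : f ⟨0, by omega⟩ = vt l hl (2 ^ l - 1) := by
          rw [h, Equiv.apply_symm_apply]
        have h0 := congrArg (fun z => (hypertree l).dist z (vt l hl (2 ^ l - 1))) hcT
        have h3 := SimpleGraph.dist_self (G := hypertree l) (v := vt l hl (2 ^ l - 1))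
        omega
      have happ := Equiv.apply_symm_apply f (vt l hl (2 ^ l - 1))
      refine ⟨⟨0, by omega⟩, f.symm (vt l hl (2 ^ l - 1)), ⟨hne, Or.inl rfl⟩, ?_⟩
      have h2' := congrArg
        (fun z => (hypertree l).dist (f ⟨0, (by omega : (0:ℕ) < 2 ^ l - 1)⟩) z) happ
      omega
  · -- upper bound
    have hlen := full_length l hl
    have hget : ∀ i : Fin (2 ^ l - 1), i.val < (fullList l).length := by
      intro i; rw [hlen]; exact i.isLt
    have hmem : ∀ i : Fin (2 ^ l - 1), 1 ≤ (fullList l).get ⟨i.val, hget i⟩ ∧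
        (fullList l).get ⟨i.val, hget i⟩ ≤ 2 ^ l - 1 := by
      intro i
      exact full_mem l hl (List.get_mem (fullList l) ⟨i.val, hget i⟩)
    have hinj : Function.Injective
        (fun i : Fin (2 ^ l - 1) => vt l hl ((fullList l).get ⟨i.val, hget i⟩)) := by
      intro i j hij
      have hvi := hmem i
      have hvj := hmem j
      have hij' : vt l hl ((fullList l).get ⟨i.val, hget i⟩)
          = vt l hl ((fullList l).get ⟨j.val, hget j⟩) := hij
      have hval := congrArg Fin.val hij'
      rw [vt_val l hl _ hvi.1 hvi.2, vt_val l hl _ hvj.1 hvj.2] at hval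
      have hgeteq : (fullList l).get ⟨i.val, hget i⟩ = (fullList l).get ⟨j.val, hget j⟩ := by
        omega
      have h5 := (List.nodup_iff_injective_get.mp (full_nodup l hl)) hgeteq
      have hvij : i.val = j.val := congrArg (Fin.val (n := (fullList l).length)) h5
      exact Fin.ext hvij
    refine ⟨Equiv.ofBijective _ ((Finite.injective_iff_bijective).mp hinj), ?_⟩
    rintro u v ⟨hne, hcase⟩
    show (hypertree l).dist (vt l hl ((fullList l).get ⟨u.val, hget u⟩))
      (vt l hl ((fullList l).get ⟨v.val, hget v⟩)) ≤ l - 1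
    have hroot : ∀ w : Fin (2 ^ l - 1),
        (hypertree l).dist (vt l hl ((fullList l).get ⟨w.val, hget w⟩)) (vt l hl 1)
          ≤ l - 1 := by
      intro w
      exact dist_root l hl _ (hmem w).1 (hmem w).2
    have hget1 : ∀ (i : Fin (2 ^ l - 1)), i.val = 0 →
        (fullList l).get ⟨i.val, hget i⟩ = 1 := by
      intro i hi
      have : (⟨i.val, hget i⟩ : Fin (fullList l).length)
          = ⟨0, by rw [hlen]; omega⟩ := by
        apply Fin.ext; exact hi
      rw [this]
      rfl
    have hchain := List.isChain_iff_getElem.mp (full_chain l hl)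
    rcases hcase with h0 | h0 | h0 | h0
    · rw [hget1 u h0, SimpleGraph.dist_comm]
      exact hroot v
    · rw [hget1 v h0]
      exact hroot u
    · -- v = u + 1
      have hlt : u.val < (fullList l).length - 1 := by
        have := v.isLt; rw [hlen]; omega
      have hc := hchain u.val (by omega)
      have hidx : v.val = u.val + 1 := by omega
      simpa only [List.get_eq_getElem, hidx] using hc
    · -- u = v + 1
      have hlt : v.val < (fullList l).length - 1 := by
        have := u.isLt; rw [hlen]; omega
      have hc := hchain v.val (by omega)
      have hidx : u.val = v.val + 1 := by omega
      rw [SimpleGraph.dist_comm]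
      simpa only [List.get_eq_getElem, hidx] using hc
end

section
/- Let l ≥ 3 and n = 2^l − 1. Then dil(W_n, ST(l)) = l − 1: every bijection from the vertices of the wheel W_n to the vertices of the sibling tree ST(l) has some edge of W_n whose endpoint images are at distance at least l − 1 in ST(l), and there exists a bijection under which every edge of W_n maps to a pair of vertices at distance at most l − 1 in ST(l). -/
open SimpleGraph

/-- Adjacency of sibling-tree labels: binary tree edges plus edges between the two
children `2x` and `2x+1` (an even label `≥ 2` and its successor). -/
def stAdjLbl (a b : ℕ) : Prop :=
  (b = 2 * a ∨ b = 2 * a + 1 ∨ a = 2 * b ∨ a = 2 * b + 1) ∨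
  (b = a + 1 ∧ a % 2 = 0 ∧ 2 ≤ a) ∨ (a = b + 1 ∧ b % 2 = 0 ∧ 2 ≤ b)

/-- The sibling tree `ST(l)` on `Fin (2^l - 1)`; vertex `x` has label `x+1`. -/
def siblingTree (l : ℕ) : SimpleGraph (Fin (2 ^ l - 1)) where
  Adj x y := stAdjLbl (x.val + 1) (y.val + 1)
  symm := ⟨by rintro x y h; unfold stAdjLbl at *; tauto⟩
  loopless := ⟨by rintro x h; unfold stAdjLbl at h; omega⟩

namespace DilST

lemma two_le_pow {l : ℕ} (hl : 1 ≤ l) : 2 ≤ 2 ^ l := by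
  calc (2:ℕ) = 2 ^ 1 := rfl
  _ ≤ 2 ^ l := Nat.pow_le_pow_right (by norm_num) hl

lemma one_le_pow (j : ℕ) : 1 ≤ 2 ^ j := Nat.one_le_two_pow

lemma size_eq {a k : ℕ} (h1 : 2 ^ k ≤ a) (h2 : a < 2 ^ (k + 1)) : Nat.size a = k + 1 :=
  le_antisymm (Nat.size_le.mpr h2) (Nat.lt_size.mpr h1)

lemma size_bounds {a : ℕ} (ha : 1 ≤ a) :
    2 ^ (Nat.size a - 1) ≤ a ∧ a < 2 ^ Nat.size a ∧ 1 ≤ Nat.size a := by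
  have h0 : 0 < Nat.size a := Nat.size_pos.mpr ha
  exact ⟨Nat.lt_size.mp (by omega), Nat.lt_size_self a, h0⟩

lemma size_double {a : ℕ} (ha : 1 ≤ a) : Nat.size (2 * a) = Nat.size a + 1 := by
  obtain ⟨h1, h2, h3⟩ := size_bounds ha
  obtain ⟨m, hm⟩ : ∃ m, Nat.size a = m + 1 := ⟨Nat.size a - 1, by omega⟩
  rw [hm] at h1 h2 ⊢
  simp only [Nat.add_sub_cancel] at h1
  refine size_eq ?_ ?_
  · calc 2 ^ (m+1) = 2 * 2^m := by ring
    _ ≤ 2 * a := by omega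
  · calc 2 * a < 2 * 2 ^ (m+1) := by omega
    _ = 2 ^ (m+2) := by ring

lemma size_double_succ {a : ℕ} (ha : 1 ≤ a) : Nat.size (2 * a + 1) = Nat.size a + 1 := by
  obtain ⟨h1, h2, h3⟩ := size_bounds ha
  obtain ⟨m, hm⟩ : ∃ m, Nat.size a = m + 1 := ⟨Nat.size a - 1, by omega⟩
  rw [hm] at h1 h2 ⊢
  simp only [Nat.add_sub_cancel] at h1
  refine size_eq ?_ ?_
  · calc 2 ^ (m+1) = 2 * 2^m := by ring
    _ ≤ 2 * a + 1 := by omega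
  · calc 2 * a + 1 < 2 * 2 ^ (m+1) := by omega
    _ = 2 ^ (m+2) := by ring

lemma size_sib {a : ℕ} (ha : 2 ≤ a) (he : a % 2 = 0) : Nat.size (a + 1) = Nat.size a := by
  obtain ⟨h1, h2, h3⟩ := size_bounds (by omega : 1 ≤ a)
  obtain ⟨m, hm⟩ : ∃ m, Nat.size a = m + 1 := ⟨Nat.size a - 1, by omega⟩
  rw [hm] at h1 h2 ⊢
  simp only [Nat.add_sub_cancel] at h1
  have hev : 2 ^ (m+1) = 2 * 2 ^ m := by ring
  refine size_eq (by omega) (by omega)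

lemma size_half {a : ℕ} (ha : 2 ≤ a) : Nat.size (a / 2) = Nat.size a - 1 := by
  obtain ⟨h1, h2, h3⟩ := size_bounds (by omega : 1 ≤ a)
  have hk2 : 2 ≤ Nat.size a := Nat.lt_size.mpr (by simpa using ha)
  obtain ⟨m, hm⟩ : ∃ m, Nat.size a = m + 2 := ⟨Nat.size a - 2, by omega⟩
  rw [hm] at h1 h2 ⊢
  rw [show m + 2 - 1 = m + 1 from by omega] at h1
  have e1 : (2:ℕ) ^ (m+1) = 2 * 2 ^ m := by ring
  have e2 : (2:ℕ) ^ (m+2) = 2 * 2 ^ (m+1) := by ring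
  have : m + 2 - 1 = m + 1 := by omega
  rw [this]
  exact size_eq (by omega) (by omega)

def phiR (l a : ℕ) : ℕ :=
  if a + 1 = 2 ^ Nat.size a then l - Nat.size a
  else if 3 * 2 ^ (Nat.size a - 2) ≤ a then l - Nat.size a + 1
  else l + Nat.size a - 3

def phiL (l a : ℕ) : ℕ :=
  if a = 2 ^ (Nat.size a - 1) then l - Nat.size a
  else if a < 3 * 2 ^ (Nat.size a - 2) then l - Nat.size a + 1
  else l + Nat.size a - 3

lemma opener {a : ℕ} (h2 : 2 ≤ a) :
    ∃ k P : ℕ, Nat.size a = k ∧ 2 ≤ k ∧ 2 ^ (k - 2) = P ∧ 1 ≤ P ∧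
      2 ^ (k - 1) = 2 * P ∧ 2 ^ k = 4 * P ∧ 2 ^ (k + 1) = 8 * P ∧
      2 * P ≤ a ∧ a < 4 * P ∧ (k = 2 ∧ P = 1 ∨ 3 ≤ k ∧ P % 2 = 0 ∧ 2 ≤ P) := by
  obtain ⟨h1, hb2, h3⟩ := size_bounds (by omega : 1 ≤ a)
  have hk2 : 2 ≤ Nat.size a := Nat.lt_size.mpr (by simpa using h2)
  obtain ⟨m, hm⟩ : ∃ m, Nat.size a = m + 2 := ⟨Nat.size a - 2, by omega⟩
  rw [hm] at h1 hb2
  rw [show m + 2 - 1 = m + 1 from by omega] at h1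
  refine ⟨m + 2, 2 ^ m, hm, by omega, by simp, one_le_pow m, ?_, ?_, ?_, ?_, ?_, ?_⟩
  · rw [show m + 2 - 1 = m + 1 from by omega]; ring
  · ring
  · ring
  · have : (2:ℕ) ^ (m+1) = 2 * 2 ^ m := by ring
    omega
  · have : (2:ℕ) ^ (m+2) = 4 * 2 ^ m := by ring
    omega
  · rcases Nat.eq_zero_or_pos m with hm0 | hm1
    · subst hm0; norm_num
    · right
      obtain ⟨m', rfl⟩ : ∃ m', m = m' + 1 := ⟨m - 1, by omega⟩
      have : (2:ℕ) ^ (m'+1) = 2 * 2 ^ m' := by ring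
      have := one_le_pow m'
      omega

lemma size_one' : Nat.size 1 = 1 := Nat.size_one
lemma size_two : Nat.size 2 = 2 := size_eq (by norm_num) (by norm_num)
lemma size_three : Nat.size 3 = 2 := size_eq (by norm_num) (by norm_num)

lemma phiR_child_left {l a : ℕ} (ha : 1 ≤ a) :
    phiR l a ≤ phiR l (2 * a) + 1 ∧ phiR l (2 * a) ≤ phiR l a + 1 := by
  rcases eq_or_lt_of_le ha with h1 | h2
  · rw [← h1]; norm_num [phiR, size_one', size_two]; omega
  · obtain ⟨k, P, hk, hk2, e0, hP, e1, e2, e3, hlo, hhi, hpar⟩ := opener h2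
    have hs2 : Nat.size (2 * a) = k + 1 := by rw [size_double ha, hk]
    simp only [phiR, hk, hs2]
    rw [show k + 1 - 2 = k - 1 from by omega]
    rw [e1, e2, e3, e0]
    split_ifs <;> omega

lemma phiR_child_right {l a : ℕ} (ha : 1 ≤ a) :
    phiR l a ≤ phiR l (2 * a + 1) + 1 ∧ phiR l (2 * a + 1) ≤ phiR l a + 1 := by
  rcases eq_or_lt_of_le ha with h1 | h2
  · rw [← h1]; norm_num [phiR, size_one', size_three]; omega
  · obtain ⟨k, P, hk, hk2, e0, hP, e1, e2, e3, hlo, hhi, hpar⟩ := opener h2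
    have hs2 : Nat.size (2 * a + 1) = k + 1 := by rw [size_double_succ ha, hk]
    simp only [phiR, hk, hs2]
    rw [show k + 1 - 2 = k - 1 from by omega]
    rw [e1, e2, e3, e0]
    split_ifs <;> omega

lemma phiR_sib {l a : ℕ} (ha : 2 ≤ a) (he : a % 2 = 0) :
    phiR l a ≤ phiR l (a + 1) + 1 ∧ phiR l (a + 1) ≤ phiR l a + 1 := by
  obtain ⟨k, P, hk, hk2, e0, hP, e1, e2, e3, hlo, hhi, hpar⟩ := opener ha
  have hs2 : Nat.size (a + 1) = k := by rw [size_sib ha he, hk]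
  simp only [phiR, hk, hs2]
  rw [e2, e0]
  split_ifs <;> omega

lemma phiL_child_left {l a : ℕ} (ha : 1 ≤ a) :
    phiL l a ≤ phiL l (2 * a) + 1 ∧ phiL l (2 * a) ≤ phiL l a + 1 := by
  rcases eq_or_lt_of_le ha with h1 | h2
  · rw [← h1]; norm_num [phiL, size_one', size_two]; omega
  · obtain ⟨k, P, hk, hk2, e0, hP, e1, e2, e3, hlo, hhi, hpar⟩ := opener h2
    have hs2 : Nat.size (2 * a) = k + 1 := by rw [size_double ha, hk]
    simp only [phiL, hk, hs2]
    rw [show k + 1 - 2 = k - 1 from by omega]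
    rw [show k + 1 - 1 = k from by omega]
    rw [e1, e2, e0]
    split_ifs <;> omega

lemma phiL_child_right {l a : ℕ} (ha : 1 ≤ a) :
    phiL l a ≤ phiL l (2 * a + 1) + 1 ∧ phiL l (2 * a + 1) ≤ phiL l a + 1 := by
  rcases eq_or_lt_of_le ha with h1 | h2
  · rw [← h1]; norm_num [phiL, size_one', size_three]; omega
  · obtain ⟨k, P, hk, hk2, e0, hP, e1, e2, e3, hlo, hhi, hpar⟩ := opener h2
    have hs2 : Nat.size (2 * a + 1) = k + 1 := by rw [size_double_succ ha, hk]
    simp only [phiL, hk, hs2]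
    rw [show k + 1 - 2 = k - 1 from by omega]
    rw [show k + 1 - 1 = k from by omega]
    rw [e1, e2, e0]
    split_ifs <;> omega

lemma phiL_sib {l a : ℕ} (ha : 2 ≤ a) (he : a % 2 = 0) :
    phiL l a ≤ phiL l (a + 1) + 1 ∧ phiL l (a + 1) ≤ phiL l a + 1 := by
  obtain ⟨k, P, hk, hk2, e0, hP, e1, e2, e3, hlo, hhi, hpar⟩ := opener ha
  have hs2 : Nat.size (a + 1) = k := by rw [size_sib ha he, hk]
  simp only [phiL, hk, hs2]
  rw [e1, e0]
  split_ifs <;> omega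

lemma phiR_lip {l : ℕ} : ∀ a b : ℕ, 1 ≤ a → 1 ≤ b → stAdjLbl a b →
    phiR l a ≤ phiR l b + 1 := by
  intro a b ha hb h
  unfold stAdjLbl at h
  rcases h with (h | h | h | h) | ⟨h, he, h2⟩ | ⟨h, he, h2⟩
  · subst h; exact (phiR_child_left ha).1
  · subst h; exact (phiR_child_right ha).1
  · subst h; exact (phiR_child_left hb).2
  · subst h; exact (phiR_child_right hb).2
  · subst h; exact (phiR_sib h2 he).1
  · subst h; exact (phiR_sib h2 he).2

lemma phiL_lip {l : ℕ} : ∀ a b : ℕ, 1 ≤ a → 1 ≤ b → stAdjLbl a b →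
    phiL l a ≤ phiL l b + 1 := by
  intro a b ha hb h
  unfold stAdjLbl at h
  rcases h with (h | h | h | h) | ⟨h, he, h2⟩ | ⟨h, he, h2⟩
  · subst h; exact (phiL_child_left ha).1
  · subst h; exact (phiL_child_right ha).1
  · subst h; exact (phiL_child_left hb).2
  · subst h; exact (phiL_child_right hb).2
  · subst h; exact (phiL_sib h2 he).1
  · subst h; exact (phiL_sib h2 he).2

lemma phi_select {l a : ℕ} (hl : 3 ≤ l) (ha : 1 ≤ a) :
    l - 1 ≤ phiR l a ∨ l - 1 ≤ phiL l a := by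
  rcases eq_or_lt_of_le ha with h1 | h2
  · left
    simp only [phiR, ← h1, size_one']
    norm_num
  · obtain ⟨k, P, hk, hk2, e0, hP, e1, e2, e3, hlo, hhi, hpar⟩ := opener h2
    by_cases hc : a < 3 * P
    · left
      simp only [phiR, hk]
      rw [e2, e0]
      split_ifs <;> omega
    · right
      simp only [phiL, hk]
      rw [e1, e0]
      split_ifs <;> omega

lemma phiR_R {l : ℕ} (hl : 1 ≤ l) : phiR l (2 ^ l - 1) = 0 := by
  obtain ⟨m, hm⟩ : ∃ m, l = m + 1 := ⟨l - 1, by omega⟩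
  subst hm
  have h1 := one_le_pow m
  have e : (2:ℕ) ^ (m+1) = 2 * 2 ^ m := by ring
  have hs : Nat.size (2 ^ (m+1) - 1) = m + 1 := size_eq (by omega) (by omega)
  simp only [phiR, hs]
  rw [show 2 ^ (m+1) - 1 + 1 = 2 ^ (m+1) from by omega]
  simp

lemma phiL_L {l : ℕ} (hl : 1 ≤ l) : phiL l (2 ^ (l - 1)) = 0 := by
  obtain ⟨m, hm⟩ : ∃ m, l = m + 1 := ⟨l - 1, by omega⟩
  subst hm
  have h1 := one_le_pow m
  have e : (2:ℕ) ^ (m+1) = 2 * 2 ^ m := by ring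
  simp only [Nat.add_sub_cancel]
  have hs : Nat.size (2 ^ m) = m + 1 := size_eq le_rfl (by omega)
  simp only [phiL, hs, Nat.add_sub_cancel]
  simp

lemma N_pos {l : ℕ} (hl : 1 ≤ l) : 0 < 2 ^ l - 1 := by
  have := two_le_pow hl; omega

def toV (l : ℕ) (hl : 1 ≤ l) (a : ℕ) : Fin (2 ^ l - 1) :=
  ⟨(a - 1) % (2 ^ l - 1), Nat.mod_lt _ (N_pos hl)⟩

lemma toV_val {l : ℕ} (hl : 1 ≤ l) {a : ℕ} (h1 : 1 ≤ a) (h2 : a ≤ 2 ^ l - 1) :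
    (toV l hl a).val = a - 1 := Nat.mod_eq_of_lt (by omega)

lemma toV_lbl {l : ℕ} (hl : 1 ≤ l) {a : ℕ} (h1 : 1 ≤ a) (h2 : a ≤ 2 ^ l - 1) :
    (toV l hl a).val + 1 = a := by
  rw [toV_val hl h1 h2]; omega

lemma toV_self {l : ℕ} (hl : 1 ≤ l) (x : Fin (2 ^ l - 1)) : toV l hl (x.val + 1) = x := by
  have hx := x.isLt
  apply Fin.ext
  rw [toV_val hl (by omega) (by omega)]
  omega

lemma adj_parent {l : ℕ} (hl : 1 ≤ l) {a : ℕ} (h2 : 2 ≤ a) (hle : a ≤ 2 ^ l - 1) :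
    (siblingTree l).Adj (toV l hl a) (toV l hl (a / 2)) := by
  show stAdjLbl ((toV l hl a).val + 1) ((toV l hl (a / 2)).val + 1)
  rw [toV_lbl hl (by omega) hle, toV_lbl hl (by omega) (by omega)]
  unfold stAdjLbl
  omega

lemma adj_sibling {l : ℕ} (hl : 1 ≤ l) {a : ℕ} (h2 : 2 ≤ a) (he : a % 2 = 0)
    (hle : a + 1 ≤ 2 ^ l - 1) :
    (siblingTree l).Adj (toV l hl a) (toV l hl (a + 1)) := by
  show stAdjLbl ((toV l hl a).val + 1) ((toV l hl (a + 1)).val + 1)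
  rw [toV_lbl hl (by omega) (by omega), toV_lbl hl (by omega) hle]
  unfold stAdjLbl
  omega

lemma walk_climb {l : ℕ} (hl : 1 ≤ l) :
    ∀ j b : ℕ, 1 ≤ b → (b + 1) * 2 ^ j - 1 ≤ 2 ^ l - 1 →
    ∃ w : (siblingTree l).Walk (toV l hl ((b + 1) * 2 ^ j - 1)) (toV l hl b), w.length ≤ j := by
  intro j
  induction j with
  | zero =>
    intro b hb hle
    rw [show (b + 1) * 2 ^ 0 - 1 = b from by norm_num]
    exact ⟨SimpleGraph.Walk.nil, by simp⟩
  | succ j ih =>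
    intro b hb hle
    have hp : 1 ≤ 2 ^ j := one_le_pow j
    have h1 : (b + 1) * 2 ^ (j + 1) = 2 * ((b + 1) * 2 ^ j) := by ring
    have ht : 2 ≤ (b + 1) * 2 ^ j := by
      calc 2 = 2 * 1 := by norm_num
      _ ≤ (b + 1) * 2 ^ j := Nat.mul_le_mul (by omega) hp
    have hle2 : 2 * ((b + 1) * 2 ^ j) - 1 ≤ 2 ^ l - 1 := by omega
    have hadj := adj_parent hl (a := 2 * ((b + 1) * 2 ^ j) - 1) (by omega) hle2
    rw [show (2 * ((b + 1) * 2 ^ j) - 1) / 2 = (b + 1) * 2 ^ j - 1 from by omega] at hadj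
    rw [show (b + 1) * 2 ^ (j + 1) - 1 = 2 * ((b + 1) * 2 ^ j) - 1 from by omega]
    obtain ⟨w, hw⟩ := ih b hb (by omega)
    exact ⟨SimpleGraph.Walk.cons hadj w, by simp [SimpleGraph.Walk.length_cons]; omega⟩

lemma walk_root {l : ℕ} (hl : 1 ≤ l) :
    ∀ a : ℕ, 1 ≤ a → a ≤ 2 ^ l - 1 →
    ∃ w : (siblingTree l).Walk (toV l hl a) (toV l hl 1), w.length ≤ Nat.size a - 1 := by
  intro a
  induction a using Nat.strong_induction_on with
  | _ a ih =>
    intro h1 hle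
    rcases eq_or_lt_of_le h1 with he | h2
    · rw [← he]
      exact ⟨SimpleGraph.Walk.nil, by simp⟩
    · obtain ⟨w, hw⟩ := ih (a / 2) (by omega) (by omega) (by omega)
      refine ⟨SimpleGraph.Walk.cons (adj_parent hl h2 hle) w, ?_⟩
      rw [SimpleGraph.Walk.length_cons]
      have hs := size_half (a := a) h2
      have hk2 : 2 ≤ Nat.size a := Nat.lt_size.mpr (by simpa using (show 2 ≤ a by omega))
      omega

lemma size_le_l {l a : ℕ} (h1 : 1 ≤ a) (hle : a ≤ 2 ^ l - 1) : Nat.size a ≤ l := by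
  have := one_le_pow l
  exact Nat.size_le.mpr (by omega)

def unrank : ℕ → ℕ → ℕ → ℕ
  | 0, c, _ => c
  | 1, c, _ => c
  | d + 2, c, r =>
    if r = 0 then c
    else if r ≤ 2 ^ (d + 1) - 1 then unrank (d + 1) (2 * c) (r - 1)
    else unrank (d + 1) (2 * c + 1) (r - 2 ^ (d + 1))

lemma unrank_zero (d c : ℕ) : unrank d c 0 = c := by
  match d with
  | 0 => rfl
  | 1 => rfl
  | e + 2 => simp [unrank]

lemma unrank_one {d : ℕ} (c : ℕ) (hd : 2 ≤ d) : unrank d c 1 = 2 * c := by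
  obtain ⟨e, rfl⟩ : ∃ e, d = e + 2 := ⟨d - 2, by omega⟩
  have h2 : 2 ≤ 2 ^ (e + 1) := two_le_pow (by omega)
  rw [unrank]
  rw [if_neg (by omega), if_pos (by omega)]
  exact unrank_zero _ _

lemma unrank_last : ∀ d : ℕ, 1 ≤ d → ∀ c : ℕ, unrank d c (2 ^ d - 2) = (c + 1) * 2 ^ (d - 1) - 1
  | 0, hd, c => by omega
  | 1, hd, c => by norm_num [unrank]
  | (e + 2), hd, c => by
    have h2 : 2 ≤ 2 ^ (e + 1) := two_le_pow (by omega)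
    have h4 : 2 ^ (e + 2) = 2 * 2 ^ (e + 1) := by ring
    rw [unrank]
    rw [if_neg (by omega), if_neg (by omega)]
    rw [show 2 ^ (e + 2) - 2 - 2 ^ (e + 1) = 2 ^ (e + 1) - 2 from by omega]
    rw [unrank_last (e + 1) (by omega) (2 * c + 1)]
    have h5 : 2 ^ (e + 1) = 2 * 2 ^ e := by ring
    simp only [Nat.add_sub_cancel]
    rw [show e + 2 - 1 = e + 1 from by omega]
    have h6 : (2 * c + 1 + 1) * 2 ^ e = (c + 1) * 2 ^ (e + 1) := by ring
    omega

lemma unrank_range : ∀ d c r : ℕ, 1 ≤ c → r ≤ 2 ^ d - 2 →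
    ∃ j, j ≤ d - 1 ∧ c * 2 ^ j ≤ unrank d c r ∧ unrank d c r < (c + 1) * 2 ^ j
  | 0, c, r, hc, hr => by
    refine ⟨0, by omega, ?_, ?_⟩ <;> simp at hr <;> subst hr <;> simp [unrank]
  | 1, c, r, hc, hr => by
    refine ⟨0, by omega, ?_, ?_⟩ <;> simp at hr <;> subst hr <;> simp [unrank]
  | (e + 2), c, r, hc, hr => by
    have h2 : 2 ≤ 2 ^ (e + 1) := two_le_pow (by omega)
    rcases Nat.eq_zero_or_pos r with rfl | hr1
    · rw [unrank_zero]
      exact ⟨0, by omega, by simp, by simp⟩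
    rw [unrank, if_neg (by omega)]
    by_cases hcase : r ≤ 2 ^ (e + 1) - 1
    · rw [if_pos hcase]
      obtain ⟨j, hj, hlo, hhi⟩ := unrank_range (e + 1) (2 * c) (r - 1) (by omega) (by omega)
      refine ⟨j + 1, by omega, ?_, ?_⟩
      · calc c * 2 ^ (j + 1) = 2 * c * 2 ^ j := by ring
        _ ≤ _ := hlo
      · calc unrank (e + 1) (2 * c) (r - 1) < (2 * c + 1) * 2 ^ j := hhi
        _ ≤ (2 * c + 2) * 2 ^ j := Nat.mul_le_mul_right _ (by omega)
        _ = (c + 1) * 2 ^ (j + 1) := by ring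
    · rw [if_neg hcase]
      have h4 : 2 ^ (e + 2) = 2 * 2 ^ (e + 1) := by ring
      obtain ⟨j, hj, hlo, hhi⟩ := unrank_range (e + 1) (2 * c + 1) (r - 2 ^ (e + 1))
        (by omega) (by omega)
      refine ⟨j + 1, by omega, ?_, ?_⟩
      · calc c * 2 ^ (j + 1) = 2 * c * 2 ^ j := by ring
        _ ≤ (2 * c + 1) * 2 ^ j := Nat.mul_le_mul_right _ (by omega)
        _ ≤ _ := hlo
      · calc unrank (e + 1) (2 * c + 1) (r - 2 ^ (e + 1)) < (2 * c + 2) * 2 ^ j := hhi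
        _ = (c + 1) * 2 ^ (j + 1) := by ring

lemma subtree_disj {c u : ℕ} (hc : 1 ≤ c)
    (h1 : ∃ j, 2 * c * 2 ^ j ≤ u ∧ u < (2 * c + 1) * 2 ^ j)
    (h2 : ∃ j, (2 * c + 1) * 2 ^ j ≤ u ∧ u < (2 * c + 2) * 2 ^ j) : False := by
  obtain ⟨j, hj1, hj2⟩ := h1
  obtain ⟨i, hi1, hi2⟩ := h2
  rcases le_total j i with h | h
  · have : (2 * c + 1) * 2 ^ j ≤ (2 * c + 1) * 2 ^ i :=
      Nat.mul_le_mul_left _ (Nat.pow_le_pow_right (by norm_num) h)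
    omega
  · have hij : i + 1 ≤ j := by
      rcases Nat.eq_or_lt_of_le h with rfl | h' 
      · omega
      · omega
    have h5 : 2 * c * 2 ^ j = c * 2 ^ (j + 1) := by ring
    have h6 : (2 * c + 2) * 2 ^ i = (c + 1) * 2 ^ (i + 1) := by ring
    have h7 : (c + 1) * 2 ^ (i + 1) ≤ (c + 1) * 2 ^ j :=
      Nat.mul_le_mul_left _ (Nat.pow_le_pow_right (by norm_num) hij)
    have h8 : (c + 1) * 2 ^ j ≤ 2 * c * 2 ^ j := Nat.mul_le_mul_right _ (by omega)
    omega

lemma unrank_inj : ∀ d c : ℕ, 1 ≤ c → ∀ r r' : ℕ, r ≤ 2 ^ d - 2 → r' ≤ 2 ^ d - 2 →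
    unrank d c r = unrank d c r' → r = r'
  | 0, c, hc, r, r', hr, hr', h => by simp at hr hr'; omega
  | 1, c, hc, r, r', hr, hr', h => by simp at hr hr'; omega
  | (e + 2), c, hc, r, r', hr, hr', h => by
    have h2 : 2 ≤ 2 ^ (e + 1) := two_le_pow (by omega)
    have h4 : 2 ^ (e + 2) = 2 * 2 ^ (e + 1) := by ring
    have key : ∀ s : ℕ, 1 ≤ s → s ≤ 2 ^ (e + 2) - 2 → unrank (e + 2) c s ≠ c := by
      intro s hs1 hs2 heq
      rw [unrank, if_neg (by omega)] at heq
      by_cases hcase : s ≤ 2 ^ (e + 1) - 1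
      · rw [if_pos hcase] at heq
        obtain ⟨j, hj, hlo, hhi⟩ := unrank_range (e + 1) (2 * c) (s - 1) (by omega) (by omega)
        have := Nat.mul_le_mul_left (2 * c) (one_le_pow j)
        omega
      · rw [if_neg hcase] at heq
        obtain ⟨j, hj, hlo, hhi⟩ := unrank_range (e + 1) (2 * c + 1) (s - 2 ^ (e + 1))
          (by omega) (by omega)
        have := Nat.mul_le_mul_left (2 * c + 1) (one_le_pow j)
        omega
    have unrank_step : ∀ s : ℕ, 1 ≤ s → unrank (e + 2) c s =
        if s ≤ 2 ^ (e + 1) - 1 then unrank (e + 1) (2 * c) (s - 1)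
        else unrank (e + 1) (2 * c + 1) (s - 2 ^ (e + 1)) := by
      intro s hs
      rw [unrank, if_neg (by omega)]
    rcases Nat.eq_zero_or_pos r with rfl | hr1 <;> rcases Nat.eq_zero_or_pos r' with rfl | hr1'
    · rfl
    · rw [unrank_zero] at h
      exact absurd h.symm (key r' hr1' hr')
    · rw [unrank_zero] at h
      exact absurd h (key r hr1 hr)
    · rw [unrank_step r hr1, unrank_step r' hr1'] at h
      by_cases hc1 : r ≤ 2 ^ (e + 1) - 1 <;> by_cases hc2 : r' ≤ 2 ^ (e + 1) - 1
      · rw [if_pos hc1, if_pos hc2] at h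
        have := unrank_inj (e + 1) (2 * c) (by omega) (r - 1) (r' - 1)
          (by omega) (by omega) h
        omega
      · rw [if_pos hc1, if_neg hc2] at h
        obtain ⟨j, hj, hlo, hhi⟩ := unrank_range (e + 1) (2 * c) (r - 1) (by omega) (by omega)
        obtain ⟨i, hi, hlo', hhi'⟩ := unrank_range (e + 1) (2 * c + 1) (r' - 2 ^ (e + 1))
          (by omega) (by omega)
        rw [show 2 * c + 1 + 1 = 2 * c + 2 from by omega] at hhi'
        exact (subtree_disj hc (u := unrank (e + 1) (2 * c) (r - 1)) ⟨j, hlo, hhi⟩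
          ⟨i, by omega, by omega⟩).elim
      · rw [if_neg hc1, if_pos hc2] at h
        obtain ⟨j, hj, hlo, hhi⟩ := unrank_range (e + 1) (2 * c) (r' - 1) (by omega) (by omega)
        obtain ⟨i, hi, hlo', hhi'⟩ := unrank_range (e + 1) (2 * c + 1) (r - 2 ^ (e + 1))
          (by omega) (by omega)
        rw [show 2 * c + 1 + 1 = 2 * c + 2 from by omega] at hhi'
        exact (subtree_disj hc (u := unrank (e + 1) (2 * c) (r' - 1)) ⟨j, hlo, hhi⟩
          ⟨i, by omega, by omega⟩).elim
      · rw [if_neg hc1, if_neg hc2] at h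
        have := unrank_inj (e + 1) (2 * c + 1) (by omega) (r - 2 ^ (e + 1)) (r' - 2 ^ (e + 1))
          (by omega) (by omega) h
        omega

lemma unrank_succ : ∀ d c r : ℕ, 1 ≤ c → 2 ≤ d → r + 1 ≤ 2 ^ d - 2 →
    unrank d c (r + 1) = 2 * unrank d c r ∨
    ∃ j b : ℕ, unrank d c r = (b + 1) * 2 ^ j - 1 ∧ unrank d c (r + 1) = b + 1 ∧
      b % 2 = 0 ∧ 2 ≤ b ∧ j + 2 ≤ d
  | 0, c, r, hc, hd, hr => by omega
  | 1, c, r, hc, hd, hr => by omega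
  | (e + 2), c, r, hc, hd, hr => by
    have h2 : 2 ≤ 2 ^ (e + 1) := two_le_pow (by omega)
    have h4 : 2 ^ (e + 2) = 2 * 2 ^ (e + 1) := by ring
    rcases Nat.eq_zero_or_pos r with rfl | hr1
    · left
      rw [unrank_zero, unrank_one c (by omega)]
    by_cases hc1 : r + 1 ≤ 2 ^ (e + 1) - 1
    · -- both in left subtree
      have he1 : 1 ≤ e := by
        by_contra hcon
        interval_cases e <;> omega
      rw [unrank, if_neg (by omega), if_pos hc1, unrank, if_neg (by omega), if_pos (by omega)]
      simp only [Nat.add_sub_cancel]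
      have heq : r - 1 + 1 = r := by omega
      rcases unrank_succ (e + 1) (2 * c) (r - 1) (by omega) (by omega) (by omega) with
        h | ⟨j, b, hb1, hb2, hb3, hb4, hb5⟩
      · left; rw [heq] at h; exact h
      · right; rw [heq] at hb2; exact ⟨j, b, hb1, hb2, hb3, hb4, hb5.trans (Nat.le_succ _)⟩
    by_cases hc2 : r + 1 = 2 ^ (e + 1)
    · -- crossing
      right
      rw [unrank, if_neg (by omega), if_pos (by omega), unrank, if_neg (by omega),
        if_neg (by omega)]
      rw [show r - 1 = 2 ^ (e + 1) - 2 from by omega,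
        show r + 1 - 2 ^ (e + 1) = 0 from by omega]
      rw [unrank_last (e + 1) (by omega) (2 * c), unrank_zero]
      simp only [Nat.add_sub_cancel]
      exact ⟨e, 2 * c, rfl, rfl, by omega, by omega, by omega⟩
    · -- both in right subtree
      have he1 : 1 ≤ e := by
        by_contra hcon
        interval_cases e <;> omega
      rw [unrank, if_neg (by omega), if_neg (by omega), unrank, if_neg (by omega),
        if_neg (by omega)]
      have heq : r - 2 ^ (e + 1) + 1 = r + 1 - 2 ^ (e + 1) := by omega
      rcases unrank_succ (e + 1) (2 * c + 1) (r - 2 ^ (e + 1)) (by omega) (by omega) (by omega) with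
        h | ⟨j, b, hb1, hb2, hb3, hb4, hb5⟩
      · left; rw [heq] at h; exact h
      · right; rw [heq] at hb2; exact ⟨j, b, hb1, hb2, hb3, hb4, hb5.trans (Nat.le_succ _)⟩

lemma pow_split {l : ℕ} (hl1 : 1 ≤ l) : 2 ^ l = 2 * 2 ^ (l - 1) := by
  obtain ⟨m, rfl⟩ : ∃ m, l = m + 1 := ⟨l - 1, by omega⟩
  simp only [Nat.add_sub_cancel]
  ring

lemma phi_walk {l : ℕ} (φ : ℕ → ℕ)
    (H : ∀ a b : ℕ, 1 ≤ a → 1 ≤ b → stAdjLbl a b → φ a ≤ φ b + 1) :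
    ∀ {x y : Fin (2 ^ l - 1)} (w : (siblingTree l).Walk x y),
      φ (x.val + 1) ≤ φ (y.val + 1) + w.length := by
  intro x y w
  induction w with
  | nil => simp
  | cons h p ih =>
    have step := H _ _ (by omega) (by omega) h
    rw [SimpleGraph.Walk.length_cons]
    omega

lemma reach {l : ℕ} (hl1 : 1 ≤ l) (x y : Fin (2 ^ l - 1)) : (siblingTree l).Reachable x y := by
  have hx := x.isLt
  have hy := y.isLt
  obtain ⟨w1, -⟩ := walk_root hl1 (x.val + 1) (by omega) (by omega)
  obtain ⟨w2, -⟩ := walk_root hl1 (y.val + 1) (by omega) (by omega)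
  have r1 : (siblingTree l).Reachable x (toV l hl1 1) := by
    rw [← toV_self hl1 x]; exact ⟨w1⟩
  have r2 : (siblingTree l).Reachable y (toV l hl1 1) := by
    rw [← toV_self hl1 y]; exact ⟨w2⟩
  exact r1.trans r2.symm

lemma dist_lower {l : ℕ} (hl : 3 ≤ l) (φ : ℕ → ℕ)
    (H : ∀ a b : ℕ, 1 ≤ a → 1 ≤ b → stAdjLbl a b → φ a ≤ φ b + 1)
    {x y : Fin (2 ^ l - 1)} (h0 : φ (y.val + 1) = 0) :
    φ (x.val + 1) ≤ (siblingTree l).dist x y := by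
  obtain ⟨p, hp⟩ := (reach (by omega) x y).exists_walk_length_eq_dist
  have := phi_walk φ H p
  omega

lemma root_dist {l : ℕ} (hl1 : 1 ≤ l) {a : ℕ} (h1 : 1 ≤ a) (h2 : a ≤ 2 ^ l - 1) :
    (siblingTree l).dist (toV l hl1 a) (toV l hl1 1) ≤ l - 1 := by
  obtain ⟨w, hw⟩ := walk_root hl1 a h1 h2
  have hd := SimpleGraph.dist_le w
  have hs := size_le_l h1 h2
  omega

lemma consec_dist {l : ℕ} (hl : 3 ≤ l) (hl1 : 1 ≤ l) (r : ℕ) (hr : r + 1 ≤ 2 ^ l - 2) :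
    (siblingTree l).dist (toV l hl1 (unrank l 1 r)) (toV l hl1 (unrank l 1 (r + 1))) ≤ l - 1 := by
  have h2l := two_le_pow hl1
  have hsplit := pow_split hl1
  obtain ⟨j0, hj0, lo0, hi0⟩ := unrank_range l 1 r le_rfl (by omega)
  obtain ⟨j1, hj1, lo1, hi1⟩ := unrank_range l 1 (r + 1) le_rfl (by omega)
  have hp0 := one_le_pow j0
  have hp1 := one_le_pow j1
  have hq0 : 2 ^ j0 ≤ 2 ^ (l - 1) := Nat.pow_le_pow_right (by norm_num) hj0
  have hq1 : 2 ^ j1 ≤ 2 ^ (l - 1) := Nat.pow_le_pow_right (by norm_num) hj1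
  have hb0 : 1 ≤ unrank l 1 r ∧ unrank l 1 r ≤ 2 ^ l - 1 := by constructor <;> omega
  have hb1 : 1 ≤ unrank l 1 (r + 1) ∧ unrank l 1 (r + 1) ≤ 2 ^ l - 1 := by
    constructor <;> omega
  rcases unrank_succ l 1 r le_rfl (by omega) hr with h | ⟨j, b, hc1, hc2, hc3, hc4, hc5⟩
  · have hadj := adj_parent hl1 (a := unrank l 1 (r + 1)) (by omega) hb1.2
    rw [show unrank l 1 (r + 1) / 2 = unrank l 1 r from by omega] at hadj
    have hd := SimpleGraph.dist_le (SimpleGraph.Walk.cons hadj.symm SimpleGraph.Walk.nil)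
    simp only [SimpleGraph.Walk.length_cons, SimpleGraph.Walk.length_nil] at hd
    omega
  · obtain ⟨w1, hw1⟩ := walk_climb hl1 j b (by omega) (by rw [← hc1]; exact hb0.2)
    have hadj : (siblingTree l).Adj (toV l hl1 b) (toV l hl1 (b + 1)) :=
      adj_sibling hl1 (by omega) hc3 (by omega)
    have hd := SimpleGraph.dist_le (w1.concat hadj)
    rw [SimpleGraph.Walk.length_concat] at hd
    rw [hc1, hc2]
    omega

lemma wrap_dist {l : ℕ} (hl : 3 ≤ l) (hl1 : 1 ≤ l) :
    (siblingTree l).dist (toV l hl1 2) (toV l hl1 (2 ^ l - 1)) ≤ l - 1 := by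
  have h8 : 8 ≤ 2 ^ l := by
    calc (8:ℕ) = 2 ^ 3 := by norm_num
    _ ≤ 2 ^ l := Nat.pow_le_pow_right (by norm_num) hl
  have e4 : (3 + 1) * 2 ^ (l - 2) - 1 = 2 ^ l - 1 := by
    obtain ⟨m, rfl⟩ : ∃ m, l = m + 2 := ⟨l - 2, by omega⟩
    simp only [Nat.add_sub_cancel]
    have : (2:ℕ) ^ (m + 2) = 4 * 2 ^ m := by ring
    omega
  obtain ⟨w1, hw1⟩ := walk_climb hl1 (l - 2) 3 (by norm_num) (by rw [e4])
  have hadj : (siblingTree l).Adj (toV l hl1 2) (toV l hl1 3) :=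
    adj_sibling hl1 le_rfl (by norm_num) (by omega)
  have hd := SimpleGraph.dist_le (SimpleGraph.Walk.cons hadj w1.reverse)
  rw [SimpleGraph.Walk.length_cons, SimpleGraph.Walk.length_reverse] at hd
  obtain ⟨L, hL1, hL2⟩ : ∃ L, L ≤ l - 2 ∧ (siblingTree l).dist (toV l hl1 2)
      (toV l hl1 ((3 + 1) * 2 ^ (l - 2) - 1)) ≤ L + 1 := ⟨w1.length, hw1, hd⟩
  rw [e4] at hL2
  omega

end DilST

open DilST

theorem dil_wheel_siblingTree (l n : ℕ) (hl : 3 ≤ l) (hn : n = 2 ^ l - 1) :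
    (∀ f : Fin n ≃ Fin (2 ^ l - 1), ∃ u v : Fin n, (wheelGraph n).Adj u v ∧
      l - 1 ≤ (siblingTree l).dist (f u) (f v)) ∧
    (∃ f : Fin n ≃ Fin (2 ^ l - 1), ∀ u v : Fin n, (wheelGraph n).Adj u v →
      (siblingTree l).dist (f u) (f v) ≤ l - 1) := by
  subst hn
  have hl1 : 1 ≤ l := by omega
  have h2l := two_le_pow hl1
  have h8 : 8 ≤ 2 ^ l := by
    calc (8:ℕ) = 2 ^ 3 := by norm_num
    _ ≤ 2 ^ l := Nat.pow_le_pow_right (by norm_num) hl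
  have hsplit := pow_split hl1
  constructor
  · -- lower bound
    intro f
    set hub : Fin (2 ^ l - 1) := ⟨0, by omega⟩ with hhub
    have hfv := (f hub).isLt
    rcases phi_select (l := l) (a := (f hub).val + 1) hl (by omega) with hphi | hphi
    · -- far target: rightmost leaf
      set t : Fin (2 ^ l - 1) := toV l hl1 (2 ^ l - 1) with ht
      have htv : t.val + 1 = 2 ^ l - 1 := toV_lbl hl1 (by omega) le_rfl
      have h0 : phiR l (t.val + 1) = 0 := by rw [htv]; exact phiR_R hl1
      have hne : hub ≠ f.symm t := by
        intro hcon
        have heq : f hub = t := by rw [hcon, Equiv.apply_symm_apply]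
        rw [heq, h0] at hphi
        omega
      refine ⟨hub, f.symm t, ⟨hne, Or.inl rfl⟩, ?_⟩
      rw [Equiv.apply_symm_apply]
      have hd := dist_lower hl (phiR l) phiR_lip (x := f hub) (y := t) h0
      omega
    · -- far target: leftmost leaf
      set t : Fin (2 ^ l - 1) := toV l hl1 (2 ^ (l - 1)) with ht
      have htv : t.val + 1 = 2 ^ (l - 1) := toV_lbl hl1 (one_le_pow _) (by omega)
      have h0 : phiL l (t.val + 1) = 0 := by rw [htv]; exact phiL_L hl1
      have hne : hub ≠ f.symm t := by
        intro hcon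
        have heq : f hub = t := by rw [hcon, Equiv.apply_symm_apply]
        rw [heq, h0] at hphi
        omega
      refine ⟨hub, f.symm t, ⟨hne, Or.inl rfl⟩, ?_⟩
      rw [Equiv.apply_symm_apply]
      have hd := dist_lower hl (phiL l) phiL_lip (x := f hub) (y := t) h0
      omega
  · -- upper bound
    set g : Fin (2 ^ l - 1) → Fin (2 ^ l - 1) := fun i => toV l hl1 (unrank l 1 i.val) with hg
    have hmem : ∀ i : Fin (2 ^ l - 1), 1 ≤ unrank l 1 i.val ∧ unrank l 1 i.val ≤ 2 ^ l - 1 := by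
      intro i
      obtain ⟨j, hj, lo, hi⟩ := unrank_range l 1 i.val le_rfl (by have := i.isLt; omega)
      have hp1 := one_le_pow j
      have hp2 : 2 ^ j ≤ 2 ^ (l - 1) := Nat.pow_le_pow_right (by norm_num) hj
      constructor <;> omega
    have hinj : Function.Injective g := by
      intro i i' hii
      have e1 := toV_val hl1 (hmem i).1 (hmem i).2
      have e2 := toV_val hl1 (hmem i').1 (hmem i').2
      have hval : unrank l 1 i.val = unrank l 1 i'.val := by
        have h' : (toV l hl1 (unrank l 1 i.val)).val = (toV l hl1 (unrank l 1 i'.val)).val :=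
          congrArg Fin.val hii
        have m1 := hmem i
        have m2 := hmem i'
        omega
      exact Fin.ext (unrank_inj l 1 le_rfl i.val i'.val
        (by have := i.isLt; omega) (by have := i'.isLt; omega) hval)
    refine ⟨Equiv.ofBijective g (Finite.injective_iff_bijective.mp hinj), ?_⟩
    intro u v hadj
    obtain ⟨hne, hcases⟩ := hadj
    show (siblingTree l).dist (g u) (g v) ≤ l - 1
    rcases hcases with h0 | h0 | h0 | h0 | ⟨h0, h1⟩ | ⟨h0, h1⟩
    · -- u is hub
      have e : unrank l 1 u.val = 1 := by rw [h0]; exact unrank_zero l 1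
      show (siblingTree l).dist (toV l hl1 (unrank l 1 u.val)) (toV l hl1 (unrank l 1 v.val)) ≤ l - 1
      rw [e, SimpleGraph.dist_comm]
      exact root_dist hl1 (hmem v).1 (hmem v).2
    · -- v is hub
      have e : unrank l 1 v.val = 1 := by rw [h0]; exact unrank_zero l 1
      show (siblingTree l).dist (toV l hl1 (unrank l 1 u.val)) (toV l hl1 (unrank l 1 v.val)) ≤ l - 1
      rw [e]
      exact root_dist hl1 (hmem u).1 (hmem u).2
    · -- v = u + 1
      have := consec_dist hl hl1 u.val (by have := v.isLt; omega)
      rw [← h0] at this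
      exact this
    · -- u = v + 1
      have := consec_dist hl hl1 v.val (by have := u.isLt; omega)
      rw [← h0] at this
      show (siblingTree l).dist (toV l hl1 (unrank l 1 u.val)) (toV l hl1 (unrank l 1 v.val)) ≤ l - 1
      rw [SimpleGraph.dist_comm]
      exact this
    · -- u = 1, v = n - 1 (wrap)
      have e1 : unrank l 1 u.val = 2 := by
        rw [h0]
        simpa using unrank_one (d := l) 1 (by omega)
      have e2 : unrank l 1 v.val = 2 ^ l - 1 := by
        rw [h1, show 2 ^ l - 1 - 1 = 2 ^ l - 2 from by omega, unrank_last l (by omega) 1]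
        omega
      show (siblingTree l).dist (toV l hl1 (unrank l 1 u.val)) (toV l hl1 (unrank l 1 v.val)) ≤ l - 1
      rw [e1, e2]
      exact wrap_dist hl hl1
    · -- v = 1, u = n - 1 (wrap)
      have e1 : unrank l 1 v.val = 2 := by
        rw [h0]
        simpa using unrank_one (d := l) 1 (by omega)
      have e2 : unrank l 1 u.val = 2 ^ l - 1 := by
        rw [h1, show 2 ^ l - 1 - 1 = 2 ^ l - 2 from by omega, unrank_last l (by omega) 1]
        omega
      show (siblingTree l).dist (toV l hl1 (unrank l 1 u.val)) (toV l hl1 (unrank l 1 v.val)) ≤ l - 1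
      rw [e1, e2, SimpleGraph.dist_comm]
      exact wrap_dist hl hl1
end

section
/- Let l ≥ 3 and n = 2^l − 1. Then dil(S_n, ST(l)) = l − 1: every bijection from the vertices of the star S_n to the vertices of the sibling tree ST(l) has some edge of S_n whose endpoint images are at distance at least l − 1 in ST(l), and there exists a bijection under which every edge of S_n maps to a pair of vertices at distance at most l − 1 in ST(l). -/
open SimpleGraph

/-- Star graph `K_{1,n-1}` on `Fin n`, centre `0`. -/
def starGraphFin (n : ℕ) : SimpleGraph (Fin n) where
  Adj x y := x ≠ y ∧ (x.val = 0 ∨ y.val = 0)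
  symm := ⟨by rintro x y ⟨h1, h2⟩; exact ⟨h1.symm, by tauto⟩⟩
  loopless := ⟨by rintro x ⟨h1, -⟩; exact h1 rfl⟩

/-- `m` is "all ones" in binary, i.e. `m = 2^k - 1` for some `k ≥ 1`. -/
def AO (m : ℕ) : Prop := m + 1 = 2 ^ Nat.log 2 (m + 1)

instance : DecidablePred AO := fun m => inferInstanceAs (Decidable (_ = _))

lemma AO_iff {m : ℕ} : AO m ↔ ∃ k, m + 1 = 2 ^ k := by
  constructor
  · intro h; exact ⟨_, h⟩
  · rintro ⟨k, hk⟩; unfold AO; rw [hk, Nat.log_pow one_lt_two]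

/-- Number of leading ones in the binary expansion of `m`. -/
def lones (m : ℕ) : ℕ :=
  if m = 0 then 0
  else if AO m then Nat.log 2 m + 1 else lones (m / 2)
  termination_by m
  decreasing_by exact Nat.div_lt_self (by omega) one_lt_two

lemma lones_AO {m : ℕ} (hm : 1 ≤ m) (h : AO m) : lones m = Nat.log 2 m + 1 := by
  rw [lones, if_neg (by omega), if_pos h]

lemma lones_not_AO {m : ℕ} (hm : 1 ≤ m) (h : ¬ AO m) : lones m = lones (m / 2) := by
  rw [lones, if_neg (by omega), if_neg h]

lemma not_AO_two_mul {a : ℕ} (ha : 1 ≤ a) : ¬ AO (2 * a) := by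
  rw [AO_iff]
  rintro ⟨k, hk⟩
  rcases k with _ | k
  · rw [pow_zero] at hk; omega
  · rw [pow_succ] at hk; omega

lemma log2_two_mul {a : ℕ} (ha : a ≠ 0) : Nat.log 2 (2 * a) = Nat.log 2 a + 1 := by
  rw [mul_comm]; exact Nat.log_mul_base one_lt_two ha

lemma log2_two_mul_add_one {a : ℕ} (ha : a ≠ 0) :
    Nat.log 2 (2 * a + 1) = Nat.log 2 a + 1 := by
  apply Nat.log_eq_of_pow_le_of_lt_pow
  · have := Nat.pow_log_le_self 2 ha
    rw [pow_succ]; omega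
  · have := Nat.lt_pow_succ_log_self one_lt_two a
    rw [pow_succ, pow_succ]
    rw [pow_succ] at this
    omega

lemma lones_two_mul {a : ℕ} (ha : 1 ≤ a) : lones (2 * a) = lones a := by
  rw [lones_not_AO (by omega) (not_AO_two_mul ha)]
  congr 1; omega

lemma AO_two_mul_add_one {a : ℕ} (ha : 1 ≤ a) : AO (2 * a + 1) ↔ AO a := by
  rw [AO_iff, AO_iff]
  constructor
  · rintro ⟨k, hk⟩
    rcases k with _ | k
    · rw [pow_zero] at hk; omega
    · rw [pow_succ] at hk; exact ⟨k, by omega⟩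
  · rintro ⟨k, hk⟩
    exact ⟨k + 1, by rw [pow_succ]; omega⟩

lemma lones_two_mul_add_one_AO {a : ℕ} (ha : 1 ≤ a) (h : AO a) :
    lones (2 * a + 1) = lones a + 1 := by
  rw [lones_AO (by omega) ((AO_two_mul_add_one ha).2 h), lones_AO ha h,
    log2_two_mul_add_one (by omega)]

lemma lones_two_mul_add_one_not {a : ℕ} (ha : 1 ≤ a) (h : ¬ AO a) :
    lones (2 * a + 1) = lones a := by
  rw [lones_not_AO (by omega) (fun hc => h ((AO_two_mul_add_one ha).1 hc))]
  congr 1; omega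

/-- Potential function: essentially (distance to the rightmost leaf) up to a constant. -/
def phi (m : ℕ) : ℤ :=
  (Nat.log 2 m : ℤ) - 2 * (lones m : ℤ) - (if AO m then 0 else 1)

lemma phi_child0 {a : ℕ} (ha : 1 ≤ a) :
    phi (2 * a) - phi a = if AO a then 0 else 1 := by
  unfold phi
  rw [log2_two_mul (by omega), lones_two_mul ha, if_neg (not_AO_two_mul ha)]
  split <;> push_cast <;> ring

lemma phi_child1 {a : ℕ} (ha : 1 ≤ a) :
    phi (2 * a + 1) - phi a = if AO a then -1 else 1 := by
  unfold phi
  rw [log2_two_mul_add_one (by omega)]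
  by_cases h : AO a
  · rw [lones_two_mul_add_one_AO ha h, if_pos ((AO_two_mul_add_one ha).2 h),
      if_pos h, if_pos h]
    push_cast; ring
  · rw [lones_two_mul_add_one_not ha h,
      if_neg (fun hc => h ((AO_two_mul_add_one ha).1 hc)), if_neg h, if_neg h]
    push_cast; ring

lemma phi_lip {a b : ℕ} (ha : 1 ≤ a) (hb : 1 ≤ b) (h : stAdjLbl a b) :
    (phi a - phi b).natAbs ≤ 1 := by
  have key : ∀ c : ℕ, 1 ≤ c → (phi (2 * c) - phi c).natAbs ≤ 1 ∧
      (phi (2 * c + 1) - phi c).natAbs ≤ 1 ∧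
      (phi (2 * c + 1) - phi (2 * c)).natAbs ≤ 1 := by
    intro c hc
    have h0 := phi_child0 hc
    have h1 := phi_child1 hc
    have h2 : phi (2 * c + 1) - phi (2 * c) =
        (phi (2 * c + 1) - phi c) - (phi (2 * c) - phi c) := by ring
    by_cases hA : AO c
    · rw [if_pos hA] at h0 h1
      refine ⟨by rw [h0]; norm_num, by rw [h1]; norm_num, by rw [h2, h0, h1]; norm_num⟩
    · rw [if_neg hA] at h0 h1
      refine ⟨by rw [h0]; norm_num, by rw [h1]; norm_num, by rw [h2, h0, h1]; norm_num⟩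
  have flip : ∀ x y : ℤ, (x - y).natAbs = (y - x).natAbs := by
    intro x y; rw [show x - y = -(y - x) by ring, Int.natAbs_neg]
  rcases h with (rfl | rfl | rfl | rfl) | ⟨rfl, he, h2a⟩ | ⟨rfl, he, h2b⟩
  · rw [flip]; exact (key a ha).1
  · rw [flip]; exact (key a ha).2.1
  · exact (key b hb).1
  · exact (key b hb).2.1
  · obtain ⟨c, rfl⟩ : ∃ c, a = 2 * c := ⟨a / 2, by omega⟩
    rw [flip]; exact (key c (by omega)).2.2
  · obtain ⟨c, rfl⟩ : ∃ c, b = 2 * c := ⟨b / 2, by omega⟩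
    exact (key c (by omega)).2.2

lemma walk_phi {l : ℕ} {u v : Fin (2 ^ l - 1)} (p : (siblingTree l).Walk u v) :
    (phi (u.val + 1) - phi (v.val + 1)).natAbs ≤ p.length := by
  induction p with
  | nil => simp
  | @cons x y z h p ih =>
    have hlip := phi_lip (a := x.val + 1) (b := y.val + 1) (by omega) (by omega) h
    have tri : (phi (x.val + 1) - phi (z.val + 1)).natAbs ≤
        (phi (x.val + 1) - phi (y.val + 1)).natAbs +
        (phi (y.val + 1) - phi (z.val + 1)).natAbs := by
      have := Int.natAbs_add_le (phi (x.val + 1) - phi (y.val + 1))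
        (phi (y.val + 1) - phi (z.val + 1))
      simpa using this
    simp only [SimpleGraph.Walk.length_cons]
    omega

lemma exists_walk_root {l : ℕ} (h0 : 0 < 2 ^ l - 1) :
    ∀ m : ℕ, ∀ x : Fin (2 ^ l - 1), x.val = m →
      ∃ p : (siblingTree l).Walk x ⟨0, h0⟩, p.length = Nat.log 2 (x.val + 1) := by
  intro m
  induction m using Nat.strong_induction_on with
  | _ m ih =>
    intro x hx
    match m, hx with
    | 0, hx =>
      have hx0 : x = ⟨0, h0⟩ := Fin.ext hx
      subst hx0
      exact ⟨SimpleGraph.Walk.nil, by simp⟩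
    | (m + 1), hx =>
      have hxlt := x.isLt
      have hpar : (m + 2) / 2 - 1 < 2 ^ l - 1 := by omega
      set par : Fin (2 ^ l - 1) := ⟨(m + 2) / 2 - 1, hpar⟩ with hpardef
      have hparval : par.val = (m + 2) / 2 - 1 := rfl
      have hadj : (siblingTree l).Adj x par := by
        show stAdjLbl (x.val + 1) (par.val + 1)
        rw [hx, hparval]
        unfold stAdjLbl
        omega
      obtain ⟨q, hq⟩ := ih ((m + 2) / 2 - 1) (by omega) par rfl
      refine ⟨SimpleGraph.Walk.cons hadj q, ?_⟩
      rw [SimpleGraph.Walk.length_cons, hq, hparval, hx]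
      rw [show (m + 2) / 2 - 1 + 1 = (m + 2) / 2 by omega,
        show m + 1 + 1 = m + 2 by omega]
      have h2 := Nat.log_div_base 2 (m + 2)
      have h3 := Nat.log_pos one_lt_two (show 2 ≤ m + 2 by omega)
      omega

set_option maxHeartbeats 1000000 in
theorem dil_star_siblingTree (l n : ℕ) (hl : 3 ≤ l) (hn : n = 2 ^ l - 1) :
    (∀ f : Fin n ≃ Fin (2 ^ l - 1), ∃ u v : Fin n, (starGraphFin n).Adj u v ∧
      l - 1 ≤ (siblingTree l).dist (f u) (f v)) ∧
    (∃ f : Fin n ≃ Fin (2 ^ l - 1), ∀ u v : Fin n, (starGraphFin n).Adj u v →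
      (siblingTree l).dist (f u) (f v) ≤ l - 1) := by
  subst hn
  have h8 : 8 ≤ 2 ^ l := by
    calc (8 : ℕ) = 2 ^ 3 := by norm_num
    _ ≤ 2 ^ l := Nat.pow_le_pow_right (by norm_num) hl
  have h0 : 0 < 2 ^ l - 1 := by omega
  have hhalf : 2 ^ (l - 1) * 2 = 2 ^ l := by
    rw [← pow_succ]; congr 1; omega
  have hquarter : 4 ≤ 2 ^ (l - 1) := by
    calc (4 : ℕ) = 2 ^ 2 := by norm_num
    _ ≤ 2 ^ (l - 1) := Nat.pow_le_pow_right (by norm_num) (by omega)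
  set root : Fin (2 ^ l - 1) := ⟨0, h0⟩ with hroot
  have hreach : ∀ x : Fin (2 ^ l - 1), (siblingTree l).Reachable x root := by
    intro x
    obtain ⟨p, -⟩ := exists_walk_root h0 x.val x rfl
    exact ⟨p⟩
  have hconn : (siblingTree l).Connected := by
    rw [connected_iff]
    exact ⟨fun x y => (hreach x).trans (hreach y).symm, ⟨root⟩⟩
  have hdphi : ∀ u v : Fin (2 ^ l - 1),
      (phi (u.val + 1) - phi (v.val + 1)).natAbs ≤ (siblingTree l).dist u v := by
    intro u v
    obtain ⟨p, hp⟩ := ((hreach u).trans (hreach v).symm).exists_walk_length_eq_dist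
    rw [← hp]
    exact walk_phi p
  constructor
  · -- lower bound
    intro f
    set L : Fin (2 ^ l - 1) := ⟨2 ^ (l - 1) - 1, by omega⟩ with hLdef
    set R : Fin (2 ^ l - 1) := ⟨2 ^ l - 2, by omega⟩ with hRdef
    have hLval : L.val + 1 = 2 ^ (l - 1) := by
      show 2 ^ (l - 1) - 1 + 1 = 2 ^ (l - 1); omega
    have hRval : R.val + 1 = 2 ^ l - 1 := by
      show 2 ^ l - 2 + 1 = 2 ^ l - 1; omega
    -- phi at L
    have hlogL : Nat.log 2 (2 ^ (l - 1)) = l - 1 := Nat.log_pow one_lt_two _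
    have hlonesL : lones (2 ^ (l - 1)) = 1 := by
      have haux : ∀ k : ℕ, lones (2 ^ k) = 1 := by
        intro k
        induction k with
        | zero =>
          have hAO1 : AO 1 := by
            unfold AO
            have : Nat.log 2 2 = 1 := by simpa using Nat.log_pow one_lt_two 1
            rw [this]; norm_num
          simpa [Nat.log_one_right] using lones_AO le_rfl hAO1
        | succ k ihk =>
          rw [pow_succ, mul_comm, lones_two_mul (Nat.one_le_two_pow), ihk]
      exact haux _
    have hAOL : ¬ AO (2 ^ (l - 1)) := by
      have : 2 ^ (l - 1) = 2 * 2 ^ (l - 2) := by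
        rw [← pow_succ']; congr 1; omega
      rw [this]
      exact not_AO_two_mul Nat.one_le_two_pow
    have hphiL : phi (L.val + 1) = (l : ℤ) - 4 := by
      rw [hLval]
      unfold phi
      rw [hlogL, hlonesL, if_neg hAOL]
      have : (3 : ℕ) ≤ l := hl
      push_cast [Nat.cast_sub (by omega : 1 ≤ l)]
      ring
    -- phi at R
    have hlogR : Nat.log 2 (2 ^ l - 1) = l - 1 := by
      apply Nat.log_eq_of_pow_le_of_lt_pow
      · omega
      · have : l - 1 + 1 = l := by omega
        rw [this]; omega
    have hAOR : AO (2 ^ l - 1) := by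
      rw [AO_iff]; exact ⟨l, by omega⟩
    have hlonesR : lones (2 ^ l - 1) = l := by
      rw [lones_AO (by omega) hAOR, hlogR]; omega
    have hphiR : phi (R.val + 1) = -(l : ℤ) - 1 := by
      rw [hRval]
      unfold phi
      rw [hlogR, hlonesR, if_pos hAOR]
      push_cast [Nat.cast_sub (by omega : 1 ≤ l)]
      ring
    have hdiff : (phi (L.val + 1) - phi (R.val + 1)).natAbs = 2 * l - 3 := by
      rw [hphiL, hphiR]
      have : ((l : ℤ) - 4) - (-(l : ℤ) - 1) = 2 * (l : ℤ) - 3 := by ring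
      rw [this]
      have h3 : (3 : ℤ) ≤ (l : ℤ) := by exact_mod_cast hl
      omega
    have hLR : 2 * l - 3 ≤ (siblingTree l).dist L R := by
      rw [← hdiff]; exact hdphi L R
    set w : Fin (2 ^ l - 1) := f ⟨0, by omega⟩ with hw
    have htri := hconn.dist_triangle (u := L) (v := w) (w := R)
    have hcases : l - 1 ≤ (siblingTree l).dist w L ∨
        l - 1 ≤ (siblingTree l).dist w R := by
      rw [SimpleGraph.dist_comm (u := w) (v := L)]
      omega
    have main : ∀ T : Fin (2 ^ l - 1), l - 1 ≤ (siblingTree l).dist w T →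
        ∃ u v : Fin (2 ^ l - 1), (starGraphFin (2 ^ l - 1)).Adj u v ∧
          l - 1 ≤ (siblingTree l).dist (f u) (f v) := by
      intro T hT
      refine ⟨⟨0, by omega⟩, f.symm T, ⟨?_, Or.inl rfl⟩, ?_⟩
      · intro hc
        have e1 : w = T := (congrArg f hc).trans (f.apply_symm_apply T)
        have e2 : (siblingTree l).dist w T = 0 :=
          (congrArg (fun x => (siblingTree l).dist x T) e1).trans
            (SimpleGraph.dist_self (G := siblingTree l) (v := T))
        omega
      · have e : T = f (f.symm T) := (f.apply_symm_apply T).symm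
        exact hT.trans_eq (congrArg ((siblingTree l).dist w) e)
    rcases hcases with h | h
    · exact main L h
    · exact main R h
  · -- upper bound
    refine ⟨Equiv.refl _, ?_⟩
    have key : ∀ x : Fin (2 ^ l - 1), (siblingTree l).dist root x ≤ l - 1 := by
      intro x
      obtain ⟨p, hp⟩ := exists_walk_root h0 x.val x rfl
      have hd : (siblingTree l).dist x root ≤ p.length := SimpleGraph.dist_le p
      have hlog : Nat.log 2 (x.val + 1) < l :=
        Nat.log_lt_of_lt_pow (by omega) (by have := x.isLt; omega)
      rw [SimpleGraph.dist_comm]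
      omega
    rintro u v ⟨hne, h0v | h0v⟩ <;> simp only [Equiv.refl_apply]
    · have : u = root := Fin.ext h0v
      rw [this]
      exact key v
    · have : v = root := Fin.ext h0v
      rw [this, SimpleGraph.dist_comm]
      exact key u
end

section
/- Let n ≥ 4. Every embedding with routing of the windmill graph WM_{2^{n−1}} (on 2^n vertices) into the circulant graph G(2^n; ±{1, 2^{n−2}}) has some edge of the circulant graph whose congestion is at least 2^{n−2}. -/
open SimpleGraph

/-- Windmill graph `WM_k` on `Fin (2k)`: the friendship graph `T_k` with one
degree-two vertex deleted; hub `0`, triangles `(0,1,2), …, (0,2k-3,2k-2)` and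
pendant vertex `2k-1`. -/
def windmillGraph (k : ℕ) : SimpleGraph (Fin (2 * k)) where
  Adj x y := x ≠ y ∧ (x.val = 0 ∨ y.val = 0 ∨
    (y.val = x.val + 1 ∧ x.val % 2 = 1) ∨ (x.val = y.val + 1 ∧ y.val % 2 = 1))
  symm := ⟨by rintro x y ⟨h1, h2⟩; exact ⟨h1.symm, by tauto⟩⟩
  loopless := ⟨by rintro x ⟨h1, -⟩; exact h1 rfl⟩

/-- The circulant graph `G(m; ±S)` on `ZMod m`: `i` and `j` are adjacent iff
`(i - j) mod m ∈ S` or `(j - i) mod m ∈ S`. -/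
def circulantG (m : ℕ) (S : Set ℕ) : SimpleGraph (ZMod m) where
  Adj i j := i ≠ j ∧ ((i - j).val ∈ S ∨ (j - i).val ∈ S)
  symm := ⟨by rintro i j ⟨h1, h2⟩; exact ⟨h1.symm, h2.symm⟩⟩
  loopless := ⟨by rintro i ⟨h1, -⟩; exact h1 rfl⟩

/-- An embedding with routing: a bijection on vertices together with, for each edge
of the guest graph, a path in the host graph between the images of its endpoints
(routing an edge in either direction uses the same path, reversed). -/
structure RoutedEmbedding {V W : Type*} (G : SimpleGraph V) (H : SimpleGraph W) where
  toEquiv : V ≃ W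
  route : ∀ u v, G.Adj u v → H.Walk (toEquiv u) (toEquiv v)
  route_isPath : ∀ u v (h : G.Adj u v), (route u v h).IsPath
  route_symm : ∀ u v (h : G.Adj u v), route v u h.symm = (route u v h).reverse

/-- The congestion of an edge `e` of the host graph: the number of guest edges whose
routing path passes through `e`. -/
noncomputable def congestion {V W : Type*} (G : SimpleGraph V) (H : SimpleGraph W)
    (R : RoutedEmbedding G H) (e : Sym2 W) : ℕ :=
  {d : Sym2 V | d ∈ G.edgeSet ∧
    ∃ u v, ∃ h : G.Adj u v, d = s(u, v) ∧ e ∈ (R.route u v h).edges}.ncard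

lemma firstEdge_mem {W : Type*} {H : SimpleGraph W} {v w : W} (p : H.Walk v w)
    (hp : ¬ p.Nil) : s(v, p.getVert 1) ∈ p.edges := by
  cases p with
  | nil => simp at hp
  | cons h q => simp [Walk.getVert_cons_succ]

theorem congestion_windmill_circulant_lb (n : ℕ) (hn : 4 ≤ n)
    (R : RoutedEmbedding (windmillGraph (2 ^ (n - 1)))
      (circulantG (2 ^ n) {1, 2 ^ (n - 2)})) :
    ∃ e ∈ (circulantG (2 ^ n) {1, 2 ^ (n - 2)}).edgeSet,
      2 ^ (n - 2) ≤ congestion _ _ R e := by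
  classical
  haveI : NeZero (2 * 2 ^ (n - 1)) := ⟨by positivity⟩
  have hm : (2 : ℕ) * 2 ^ (n - 1) = 2 ^ n := by
    have h1 : n - 1 + 1 = n := by omega
    calc (2 : ℕ) * 2 ^ (n - 1) = 2 ^ (n - 1) * 2 := by ring
      _ = 2 ^ (n - 1 + 1) := (pow_succ 2 _).symm
      _ = 2 ^ n := by rw [h1]
  have hk2 : (2 : ℕ) ^ (n - 1) = 2 * 2 ^ (n - 2) := by
    have h1 : n - 2 + 1 = n - 1 := by omega
    calc (2 : ℕ) ^ (n - 1) = 2 ^ (n - 2 + 1) := by rw [h1]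
      _ = 2 ^ (n - 2) * 2 := pow_succ 2 _
      _ = 2 * 2 ^ (n - 2) := by ring
  have ha4 : 4 ≤ 2 ^ (n - 2) := by
    calc (4 : ℕ) = 2 ^ 2 := rfl
      _ ≤ 2 ^ (n - 2) := Nat.pow_le_pow_right (by norm_num) (by omega)
  -- the hub is adjacent to every other vertex
  have hub_adj : ∀ v : Fin (2 * 2 ^ (n - 1)), v ≠ 0 →
      (windmillGraph (2 ^ (n - 1))).Adj 0 v := by
    intro v hv
    exact ⟨fun h => hv h.symm, Or.inl (by simp)⟩
  -- routes from the hub are non-nil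
  have route_not_nil : ∀ (v : Fin (2 * 2 ^ (n - 1)))
      (h : (windmillGraph (2 ^ (n - 1))).Adj 0 v), v ≠ 0 → ¬ (R.route 0 v h).Nil :=
    fun v h hv => Walk.not_nil_of_ne (fun he => hv (R.toEquiv.injective he).symm)
  -- the second-vertex map
  set g : Fin (2 * 2 ^ (n - 1)) → ZMod (2 ^ n) := fun v =>
    if h : (windmillGraph (2 ^ (n - 1))).Adj 0 v then (R.route 0 v h).getVert 1
    else R.toEquiv 0 with hg
  -- all second vertices land in the 4-element neighbor set
  set T : Finset (ZMod (2 ^ n)) :=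
    {R.toEquiv 0 + 1, R.toEquiv 0 - 1, R.toEquiv 0 + (2 ^ (n - 2) : ℕ),
      R.toEquiv 0 - (2 ^ (n - 2) : ℕ)} with hT
  have hmaps : ∀ v ∈ (Finset.univ.erase (0 : Fin (2 * 2 ^ (n - 1)))), g v ∈ T := by
    intro v hv
    rw [Finset.mem_erase] at hv
    have hadj := hub_adj v hv.1
    rw [hg]
    simp only [dif_pos hadj]
    have hninl := route_not_nil v hadj hv.1
    have hHadj : (circulantG (2 ^ n) {1, 2 ^ (n - 2)}).Adj (R.toEquiv 0)
        ((R.route 0 v hadj).getVert 1) := Walk.adj_snd hninl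
    obtain ⟨-, hd⟩ := hHadj
    set y := (R.route 0 v hadj).getVert 1
    have key : ∀ z w : ZMod (2 ^ n), (z - w).val ∈ ({1, 2 ^ (n - 2)} : Set ℕ) →
        z = w + 1 ∨ z = w + (2 ^ (n - 2) : ℕ) := by
      intro z w hzw
      rcases hzw with h1 | h1
      · left
        have h2 : ((z - w).val : ZMod (2 ^ n)) = ((1 : ℕ) : ZMod (2 ^ n)) := by rw [h1]
        rw [ZMod.natCast_val, ZMod.cast_id] at h2
        push_cast at h2
        linear_combination h2
      · right
        have h2 : ((z - w).val : ZMod (2 ^ n)) = ((2 ^ (n - 2) : ℕ) : ZMod (2 ^ n)) := by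
          rw [h1]
        rw [ZMod.natCast_val, ZMod.cast_id] at h2
        linear_combination h2
    rw [hT]
    simp only [Finset.mem_insert, Finset.mem_singleton]
    rcases hd with h1 | h1
    · rcases key _ _ h1 with h2 | h2
      · right; left; rw [h2]; ring
      · right; right; right; rw [h2]; ring
    · rcases key _ _ h1 with h2 | h2
      · left; exact h2
      · right; right; left; exact h2
  -- pigeonhole
  have hTcard : T.card ≤ 4 := by
    rw [hT]
    apply le_trans (Finset.card_insert_le _ _)
    apply Nat.succ_le_succ
    apply le_trans (Finset.card_insert_le _ _)
    apply Nat.succ_le_succ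
    exact le_trans (Finset.card_insert_le _ _)
      (Nat.succ_le_succ (Finset.card_singleton _).le)
  have hscard : (Finset.univ.erase (0 : Fin (2 * 2 ^ (n - 1)))).card
      = 2 * 2 ^ (n - 1) - 1 := by
    rw [Finset.card_erase_of_mem (Finset.mem_univ _)]
    simp
  have hlt : T.card * (2 ^ (n - 2) - 1)
      < (Finset.univ.erase (0 : Fin (2 * 2 ^ (n - 1)))).card := by
    rw [hscard]
    have h1 : T.card * (2 ^ (n - 2) - 1) ≤ 4 * (2 ^ (n - 2) - 1) :=
      Nat.mul_le_mul_right _ hTcard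
    omega
  obtain ⟨y, hyT, hy⟩ :=
    Finset.exists_lt_card_fiber_of_mul_lt_card_of_maps_to hmaps hlt
  set F := (Finset.univ.erase (0 : Fin (2 * 2 ^ (n - 1)))).filter (fun v => g v = y)
    with hF
  have hy' : 2 ^ (n - 2) ≤ F.card := by omega
  -- F is nonempty, giving the host edge
  obtain ⟨v₀, hv₀⟩ : F.Nonempty := Finset.card_pos.mp (by omega)
  rw [hF, Finset.mem_filter, Finset.mem_erase] at hv₀
  have hadj₀ := hub_adj v₀ hv₀.1.1
  have hninl₀ := route_not_nil v₀ hadj₀ hv₀.1.1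
  have hHadj : (circulantG (2 ^ n) {1, 2 ^ (n - 2)}).Adj (R.toEquiv 0) y := by
    have h1 : (circulantG (2 ^ n) {1, 2 ^ (n - 2)}).Adj (R.toEquiv 0)
        ((R.route 0 v₀ hadj₀).getVert 1) := Walk.adj_snd (p := R.route 0 v₀ hadj₀) hninl₀
    have hgv : g v₀ = (R.route 0 v₀ hadj₀).getVert 1 := by rw [hg]; simp [dif_pos hadj₀]
    rwa [← hgv, hv₀.2] at h1
  refine ⟨s(R.toEquiv 0, y), hHadj, ?_⟩
  -- lower bound the congestion
  have himg : ↑(F.image fun v => s((0 : Fin (2 * 2 ^ (n - 1))), v)) ⊆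
      {d : Sym2 (Fin (2 * 2 ^ (n - 1))) | d ∈ (windmillGraph (2 ^ (n - 1))).edgeSet ∧
        ∃ u v, ∃ h : (windmillGraph (2 ^ (n - 1))).Adj u v, d = s(u, v) ∧
          s(R.toEquiv 0, y) ∈ (R.route u v h).edges} := by
    intro d hd
    simp only [Finset.coe_image, Set.mem_image, Finset.mem_coe] at hd
    obtain ⟨v, hvF, rfl⟩ := hd
    rw [hF, Finset.mem_filter, Finset.mem_erase] at hvF
    have hadj := hub_adj v hvF.1.1
    have hninl := route_not_nil v hadj hvF.1.1
    refine ⟨hadj, 0, v, hadj, rfl, ?_⟩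
    have hgv : g v = (R.route 0 v hadj).getVert 1 := by rw [hg]; simp [dif_pos hadj]
    have h1 := firstEdge_mem (R.route 0 v hadj) hninl
    rwa [← hgv, hvF.2] at h1
  have hcard : (F.image fun v => s((0 : Fin (2 * 2 ^ (n - 1))), v)).card = F.card := by
    apply Finset.card_image_of_injOn
    intro x hx z hz hxz
    rw [Finset.mem_coe, hF, Finset.mem_filter, Finset.mem_erase] at hx hz
    have h1 := Sym2.eq_iff.mp hxz
    rcases h1 with ⟨-, h2⟩ | ⟨-, h2⟩
    · exact h2
    · exact absurd h2 hx.1.1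
  calc (2 : ℕ) ^ (n - 2) ≤ F.card := hy'
    _ = (F.image fun v => s((0 : Fin (2 * 2 ^ (n - 1))), v)).card := hcard.symm
    _ = (↑(F.image fun v => s((0 : Fin (2 * 2 ^ (n - 1))), v)) : Set _).ncard :=
        (Set.ncard_coe_finset _).symm
    _ ≤ _ := Set.ncard_le_ncard himg (Set.toFinite _)
end

section
/- Let G be a connected finite simple graph on n ≥ 5 vertices such that for every pair of distinct vertices u and v, the graph G − {u, v} obtained by deleting u and v (and all incident edges) contains a Hamiltonian cycle. Then G contains a Hamiltonian path, i.e., a path of length n − 1 visiting all n vertices. -/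
open SimpleGraph

private lemma rotate_isHamiltonianCycle {V : Type*} [DecidableEq V] {G : SimpleGraph V}
    {a u : V} {c : G.Walk a a} (hc : c.IsHamiltonianCycle) (h : u ∈ c.support) :
    (c.rotate _ h).IsHamiltonianCycle := by
  rw [Walk.isHamiltonianCycle_iff_isCycle_and_support_count_tail_eq_one] at hc ⊢
  exact ⟨hc.1.rotate h, fun b =>
    ((Walk.support_rotate c _ h).perm.count_eq b).trans (hc.2 b)⟩

/-- Every vertex outside a deleted pair has a neighbor outside the pair. -/
private lemma exists_nbr {V : Type*} [Fintype V] [DecidableEq V] {G : SimpleGraph V}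
    (hfault : ∀ u v : V, u ≠ v →
      ∃ (a : ({u, v}ᶜ : Set V)) (c : (G.induce ({u, v}ᶜ : Set V)).Walk a a),
        c.IsHamiltonianCycle)
    {u v w : V} (huv : u ≠ v) (hw : w ∈ ({u, v}ᶜ : Set V)) :
    ∃ y ∈ ({u, v}ᶜ : Set V), G.Adj w y := by
  obtain ⟨a, c, hc⟩ := hfault u v huv
  have hmem : (⟨w, hw⟩ : ({u, v}ᶜ : Set V)) ∈ c.support := hc.mem_support _
  have hd := rotate_isHamiltonianCycle hc hmem
  have hnn : ¬ (c.rotate _ hmem).Nil := hd.isCycle.not_nil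
  have hadj := Walk.adj_snd hnn
  exact ⟨((c.rotate _ hmem).getVert 1 : ({u, v}ᶜ : Set V)),
    ((c.rotate _ hmem).getVert 1).2, hadj⟩

theorem hamiltonian_path_of_two_fault_hamiltonian
    {V : Type*} [Fintype V] [DecidableEq V] (G : SimpleGraph V) (n : ℕ)
    (hcard : Fintype.card V = n) (hn : 5 ≤ n) (hconn : G.Connected)
    (hfault : ∀ u v : V, u ≠ v →
      ∃ (a : ({u, v}ᶜ : Set V)) (c : (G.induce ({u, v}ᶜ : Set V)).Walk a a),
        c.IsHamiltonianCycle) :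
    ∃ (a b : V) (p : G.Walk a b), p.IsHamiltonian := by
  classical
  have hcard5 : 5 ≤ Fintype.card V := hcard ▸ hn
  -- find an edge u ~ v
  have h1 : 1 < Fintype.card V := by omega
  obtain ⟨x, y, hxy⟩ := Fintype.exists_pair_of_one_lt_card h1
  obtain ⟨p⟩ := hconn x y
  have hadjuv : G.Adj x (p.getVert 1) := Walk.adj_snd (Walk.not_nil_of_ne hxy)
  obtain ⟨u, v, huv⟩ : ∃ u v, G.Adj u v := ⟨x, _, hadjuv⟩
  have hne : u ≠ v := huv.ne
  -- find a third vertex w ∉ {u, v}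
  have : ((Finset.univ : Finset V) \ {u, v}).Nonempty := by
    rw [← Finset.card_pos]
    have h2 : ({u, v} : Finset V).card ≤ 2 := by
      simpa using Finset.card_insert_le u ({v} : Finset V)
    have := Finset.le_card_sdiff ({u, v} : Finset V) Finset.univ
    rw [Finset.card_univ] at this
    omega
  obtain ⟨w, hwmem⟩ := this
  simp only [Finset.mem_sdiff, Finset.mem_insert, Finset.mem_singleton] at hwmem
  have hwu : w ≠ u := fun h => hwmem.2 (Or.inl h)
  have hwv : w ≠ v := fun h => hwmem.2 (Or.inr h)
  -- u has a neighbor z ∉ {v, w}, hence z ∉ {u, v}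
  have hvw : v ≠ w := fun h => hwv h.symm
  have humem : u ∈ ({v, w}ᶜ : Set V) := by
    simp only [Set.mem_compl_iff, Set.mem_insert_iff, Set.mem_singleton_iff, not_or]
    exact ⟨hne, hwu.symm⟩
  obtain ⟨z, hzmem, hadjuz⟩ := exists_nbr hfault hvw humem
  have hzv : z ≠ v := by simp only [Set.mem_compl_iff, Set.mem_insert_iff,
    Set.mem_singleton_iff, not_or] at hzmem; exact hzmem.1
  have hzu : z ≠ u := hadjuz.ne'
  have hzs : z ∈ ({u, v}ᶜ : Set V) := by simp [hzu, hzv]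
  -- get hamiltonian cycle of G - {u, v}, rotate so that it starts at z
  obtain ⟨a, c, hc⟩ := hfault u v hne
  set s : Set V := ({u, v}ᶜ : Set V) with hs
  have hmem : (⟨z, hzs⟩ : s) ∈ c.support := hc.mem_support _
  set d := c.rotate _ hmem with hd
  have hdham := rotate_isHamiltonianCycle hc hmem
  have hth : d.tail.IsHamiltonian := hdham.isHamiltonian_tail
  -- map the tail to G
  set q : G.Walk ((d.getVert 1 : s) : V) z :=
    d.tail.map (SimpleGraph.Embedding.induce s).toHom with hq
  -- build the final walk: v - u - z - ... (rest of cycle)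
  refine ⟨v, ((d.getVert 1 : s) : V), Walk.cons huv.symm (Walk.cons hadjuz q.reverse), ?_⟩
  intro b
  have hsupq : q.support = d.tail.support.map (Subtype.val) := by
    exact Walk.support_map ..
  simp only [Walk.support_cons, Walk.support_reverse, List.count_cons, hsupq,
    List.count_reverse]
  by_cases hbs : b ∈ s
  · have hbu : b ≠ u := by
      intro h; subst h; simp [hs] at hbs
    have hbv : b ≠ v := by
      intro h; subst h; simp [hs] at hbs
    have : d.tail.support.unattach.count b = 1 := by
      show (d.tail.support.map Subtype.val).count b = 1
      have : b = ((⟨b, hbs⟩ : s) : V) := rfl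
      rw [this, List.count_map_of_injective _ _ Subtype.val_injective]
      convert hth (⟨b, hbs⟩ : s) using 2
      exact lawful_beq_subsingleton _ _
    simp [this, Ne.symm hbu, Ne.symm hbv]
  · have : d.tail.support.unattach.count b = 0 := by
      show (d.tail.support.map Subtype.val).count b = 0
      rw [List.count_eq_zero]
      intro hb
      rw [List.mem_map] at hb
      obtain ⟨⟨b', hb'⟩, _, rfl⟩ := hb
      exact hbs hb'
    have this2 : (List.map Subtype.val d.tail.support).count b = 0 := this
    rw [this2]
    have hbu : b = u ∨ b = v := by
      by_contra hcon
      push_neg at hcon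
      exact hbs (by simp [hs, hcon.1, hcon.2])
    rcases hbu with rfl | rfl <;> simp [hne, hne.symm]
end
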